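/- arXiv:1707.00807 — 10 statements merged into one kernel-verified Lean document; each statement's English description precedes it below -/
import Mathlib

section
/- Let B : Ω → ℝ be a 𝓖-measurable random variable with 0 ≤ B ≤ A pointwise, and let 𝓗 be the σ-algebra generated by the single event {B < Φ}. Then P-almost surely, E[1_{{A < Φ}} | 𝓖 ⊔ 𝓗] = 1_{{B < Φ}} · e^{−(A − B)}. (This is the paper's identity P(τ > T | 𝒢_T ∨ 𝓗_t) = 1_{{τ > t}} exp(−∫_t^T μ_s ds), with B = ∫_0^t μ_s ds and A = ∫_0^T μ_s ds.) -/
open MeasureTheory ProbabilityTheory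

open scoped ENNReal

/-- Fubini computation on a product space. -/
lemma survival_aux_prod {α : Type*} [MeasurableSpace α] (μ : Measure ℝ) [IsFiniteMeasure μ]
    (ν : Measure α) [IsFiniteMeasure ν]
    (f : α → ℝ≥0∞) (hf : Measurable f) (C : α → ℝ) (hC : Measurable C) :
    ∫⁻ p, f p.2 * ({p : ℝ × α | C p.2 < p.1}.indicator 1 p) ∂(μ.prod ν)
      = ∫⁻ a, f a * μ (Set.Ioi (C a)) ∂ν := by
  have hset : MeasurableSet {p : ℝ × α | C p.2 < p.1} :=
    measurableSet_lt (hC.comp measurable_snd) measurable_fst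
  have hF : Measurable fun p : ℝ × α => f p.2 * ({p : ℝ × α | C p.2 < p.1}.indicator 1 p) := by
    exact (hf.comp measurable_snd).mul (measurable_one.indicator hset)
  rw [MeasureTheory.lintegral_prod_symm' _ hF]
  congr 1
  ext a
  have : ∀ x : ℝ, ({p : ℝ × α | C p.2 < p.1}.indicator 1 (x, a) : ℝ≥0∞)
      = (Set.Ioi (C a)).indicator 1 x := by
    intro x
    by_cases h : C a < x
    · simp [Set.indicator_of_mem, h, Set.mem_Ioi, Set.mem_setOf_eq]
    · simp [Set.indicator_of_notMem, h, Set.mem_Ioi, Set.mem_setOf_eq]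
  simp_rw [this]
  rw [lintegral_const_mul _ (measurable_one.indicator measurableSet_Ioi)]
  congr 1
  exact lintegral_indicator_one measurableSet_Ioi

/-- Key identity: integrating a `G`-measurable weight against the survival indicator
`1_{C < Φ}` is the same as integrating against `exp (-C)`. -/
lemma survival_key {Ω : Type*} (G : MeasurableSpace Ω) {mF : MeasurableSpace Ω}
    (hG : G ≤ mF) (P : Measure Ω) [IsProbabilityMeasure P]
    (Φ : Ω → ℝ) (hΦ : Measurable Φ)
    (hlaw : ∀ s : ℝ, 0 ≤ s → P {ω | s < Φ ω} = ENNReal.ofReal (Real.exp (-s)))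
    (hindep : Indep (MeasurableSpace.comap Φ inferInstance) G P)
    (f : Ω → ℝ≥0∞) (hf : Measurable[G] f)
    (C : Ω → ℝ) (hC : Measurable[G] C) (hC0 : ∀ ω, 0 ≤ C ω) :
    ∫⁻ ω, f ω * ({ω' | C ω' < Φ ω'}.indicator 1 ω) ∂P
      = ∫⁻ ω, f ω * ENNReal.ofReal (Real.exp (-C ω)) ∂P := by
  set ν : @Measure Ω G := P.trim hG with hν
  haveI : IsFiniteMeasure ν := MeasureTheory.isFiniteMeasure_trim hG
  set μ : Measure ℝ := P.map Φ with hμ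
  haveI : IsProbabilityMeasure μ := Measure.isProbabilityMeasure_map hΦ.aemeasurable
  have hGid : @Measurable Ω Ω mF G id := measurable_id'' hG
  have hZ : @Measurable Ω (ℝ × Ω) mF (@Prod.instMeasurableSpace ℝ Ω _ G)
      (fun ω => (Φ ω, ω)) := Measurable.prodMk hΦ hGid
  have hmap : @Measure.prod ℝ Ω _ G μ ν = @Measure.map Ω (ℝ × Ω) mF (@Prod.instMeasurableSpace ℝ Ω _ G) (fun ω => (Φ ω, ω)) P := by
    refine @Measure.prod_eq ℝ Ω _ G μ inferInstance ν inferInstance _ ?_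
    intro s t hs ht
    rw [Measure.map_apply hZ (hs.prod ht)]
    have hpre : (fun ω => (Φ ω, ω)) ⁻¹' (s ×ˢ t) = (Φ ⁻¹' s) ∩ t := by
      ext ω; simp [Set.mem_prod]
    rw [hpre, (Indep_iff _ _ _).mp hindep _ _ ⟨s, hs, rfl⟩ ht,
      Measure.map_apply hΦ hs, trim_measurableSet_eq hG ht]
  have hind : ∀ ω : Ω, ({p : ℝ × Ω | C p.2 < p.1}.indicator 1 (Φ ω, ω) : ℝ≥0∞)
      = {ω' | C ω' < Φ ω'}.indicator 1 ω := by
    intro ω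
    by_cases h : C ω < Φ ω
    · simp [Set.indicator_of_mem, h, Set.mem_setOf_eq]
    · simp [Set.indicator_of_notMem, h, Set.mem_setOf_eq]
  have hset : MeasurableSet[@Prod.instMeasurableSpace ℝ Ω _ G] {p : ℝ × Ω | C p.2 < p.1} :=
    ((hC.comp (@measurable_snd ℝ Ω _ G)).prodMk (@measurable_fst ℝ Ω _ G))
      measurableSet_lt'
  have hF : Measurable[@Prod.instMeasurableSpace ℝ Ω _ G]
      (fun p : ℝ × Ω => f p.2 * ({p : ℝ × Ω | C p.2 < p.1}.indicator 1 p)) := by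
    exact (hf.comp (@measurable_snd ℝ Ω _ G)).mul ((@measurable_one ℝ≥0∞ (ℝ × Ω) _ (@Prod.instMeasurableSpace ℝ Ω _ G) _).indicator hset)
  calc
    ∫⁻ ω, f ω * ({ω' | C ω' < Φ ω'}.indicator 1 ω) ∂P
        = ∫⁻ p, f p.2 * ({p : ℝ × Ω | C p.2 < p.1}.indicator 1 p) ∂(@Measure.prod ℝ Ω _ G μ ν) := by
          rw [hmap, @lintegral_map Ω (ℝ × Ω) mF (@Prod.instMeasurableSpace ℝ Ω _ G) P _ _ hF hZ]
          refine lintegral_congr fun ω => ?_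
          rw [hind ω]
    _ = ∫⁻ a, f a * μ (Set.Ioi (C a)) ∂ν := @survival_aux_prod Ω G μ inferInstance ν inferInstance f hf C hC
    _ = ∫⁻ a, f a * ENNReal.ofReal (Real.exp (-C a)) ∂ν := by
          refine lintegral_congr fun a => ?_
          rw [hμ, Measure.map_apply hΦ measurableSet_Ioi]
          have h2 : Φ ⁻¹' Set.Ioi (C a) = {ω | C a < Φ ω} := rfl
          rw [h2, hlaw (C a) (hC0 a)]
    _ = ∫⁻ ω, f ω * ENNReal.ofReal (Real.exp (-C ω)) ∂P := by
          refine lintegral_trim hG ?_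
          exact hf.mul (ENNReal.measurable_ofReal.comp (Real.measurable_exp.comp hC.neg))

/-- Set version of the key identity: for `G`-measurable `s`,
`P (s ∩ {A < Φ}) = ∫⁻_s 1_{B < Φ} exp (-(A-B)) dP`. -/
lemma survival_setkey {Ω : Type*} (G : MeasurableSpace Ω) {mF : MeasurableSpace Ω}
    (hG : G ≤ mF) (P : Measure Ω) [IsProbabilityMeasure P]
    (Φ : Ω → ℝ) (hΦ : Measurable Φ)
    (hlaw : ∀ s : ℝ, 0 ≤ s → P {ω | s < Φ ω} = ENNReal.ofReal (Real.exp (-s)))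
    (hindep : Indep (MeasurableSpace.comap Φ inferInstance) G P)
    (A : Ω → ℝ) (hA : Measurable[G] A) (hA0 : ∀ ω, 0 ≤ A ω)
    (B : Ω → ℝ) (hB : Measurable[G] B) (hB0 : ∀ ω, 0 ≤ B ω) (hBA : ∀ ω, B ω ≤ A ω)
    (s : Set Ω) (hs : MeasurableSet[G] s) :
    P (s ∩ {ω | A ω < Φ ω})
      = ∫⁻ ω in s,
          Set.indicator {ω' | B ω' < Φ ω'}
            (fun ω' => ENNReal.ofReal (Real.exp (-(A ω' - B ω')))) ω ∂P := by
  have hAm : Measurable[mF] A := hA.mono hG le_rfl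
  have hBm : Measurable[mF] B := hB.mono hG le_rfl
  have hsm : MeasurableSet[mF] s := hG _ hs
  have hTm : MeasurableSet[mF] {ω | A ω < Φ ω} := (hAm.prodMk hΦ) measurableSet_lt'
  have h1 := survival_key G hG P Φ hΦ hlaw hindep (s.indicator 1)
      ((@measurable_one ℝ≥0∞ Ω _ G _).indicator hs) A hA hA0
  have h2 := survival_key G hG P Φ hΦ hlaw hindep
      (s.indicator fun ω => ENNReal.ofReal (Real.exp (-(A ω - B ω))))
      ((ENNReal.measurable_ofReal.comp (Real.measurable_exp.comp (hA.sub hB).neg)).indicator hs)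
      B hB hB0
  calc
    P (s ∩ {ω | A ω < Φ ω})
        = ∫⁻ ω, s.indicator 1 ω * ({ω' | A ω' < Φ ω'}.indicator 1 ω) ∂P := by
          rw [← lintegral_indicator_one (hsm.inter hTm)]
          refine lintegral_congr fun ω => ?_
          by_cases h1 : ω ∈ s <;> by_cases h2 : ω ∈ {ω' | A ω' < Φ ω'} <;>
            simp [Set.indicator_apply, Set.mem_inter_iff, h1, h2]
    _ = ∫⁻ ω, s.indicator 1 ω * ENNReal.ofReal (Real.exp (-A ω)) ∂P := h1
    _ = ∫⁻ ω, (s.indicator fun ω' => ENNReal.ofReal (Real.exp (-(A ω' - B ω')))) ω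
          * ENNReal.ofReal (Real.exp (-B ω)) ∂P := by
          refine lintegral_congr fun ω => ?_
          by_cases hω : ω ∈ s
          · simp only [Set.indicator_of_mem hω, Pi.one_apply, one_mul]
            rw [← ENNReal.ofReal_mul (Real.exp_nonneg _), ← Real.exp_add]
            ring_nf
          · simp [Set.indicator_of_notMem hω]
    _ = ∫⁻ ω, (s.indicator fun ω' => ENNReal.ofReal (Real.exp (-(A ω' - B ω')))) ω
          * ({ω' | B ω' < Φ ω'}.indicator 1 ω) ∂P := h2.symm
    _ = ∫⁻ ω in s,
          Set.indicator {ω' | B ω' < Φ ω'}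
            (fun ω' => ENNReal.ofReal (Real.exp (-(A ω' - B ω')))) ω ∂P := by
          rw [← lintegral_indicator hsm]
          refine lintegral_congr fun ω => ?_
          by_cases h1 : ω ∈ s <;> by_cases h2 : ω ∈ {ω' | B ω' < Φ ω'} <;>
            simp [Set.indicator_apply, h1, h2]


lemma survival_final {Ω : Type*} (G H : MeasurableSpace Ω) {mF : MeasurableSpace Ω}
    (hm : G ⊔ H ≤ mF) (P : Measure Ω) [IsProbabilityMeasure P]
    (Φ : Ω → ℝ) (hΦ : Measurable Φ) (A B : Ω → ℝ)
    (hAm : Measurable A) (hBm : Measurable B) (hBA : ∀ ω, B ω ≤ A ω)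
    (hSm' : MeasurableSet[G ⊔ H] {ω | B ω < Φ ω})
    (hkey : ∀ E, MeasurableSet[G ⊔ H] E →
      P (E ∩ {ω | A ω < Φ ω})
        = ∫⁻ ω in E, Set.indicator {ω' | B ω' < Φ ω'}
            (fun ω' => ENNReal.ofReal (Real.exp (-(A ω' - B ω')))) ω ∂P)
    (hgmeas : Measurable[G ⊔ H] (fun ω =>
      Set.indicator {ω | B ω < Φ ω} (fun _ => (1 : ℝ)) ω * Real.exp (-(A ω - B ω)))) :
    P[Set.indicator {ω | A ω < Φ ω} (fun _ => (1 : ℝ)) | G ⊔ H]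
      =ᵐ[P] fun ω =>
        Set.indicator {ω | B ω < Φ ω} (fun _ => (1 : ℝ)) ω * Real.exp (-(A ω - B ω)) := by
  have hTm : MeasurableSet[mF] {ω | A ω < Φ ω} := (hAm.prodMk hΦ) measurableSet_lt'
  set ρ : Ω → ℝ≥0∞ :=
    Set.indicator {ω' | B ω' < Φ ω'}
      (fun ω' => ENNReal.ofReal (Real.exp (-(A ω' - B ω')))) with hρ
  set g : Ω → ℝ := fun ω =>
    Set.indicator {ω | B ω < Φ ω} (fun _ => (1 : ℝ)) ω * Real.exp (-(A ω - B ω)) with hg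
  have hg_meas_mF : Measurable[mF] g := hgmeas.mono hm le_rfl
  have hg_nonneg : ∀ ω, 0 ≤ g ω := by
    intro ω
    by_cases hω : ω ∈ {ω' | B ω' < Φ ω'}
    · rw [hg]; simp only [Set.indicator_of_mem hω]
      positivity
    · rw [hg]; simp only [Set.indicator_of_notMem hω, zero_mul]; exact le_rfl
  have hg_ofReal : ∀ ω, ENNReal.ofReal (g ω) = ρ ω := by
    intro ω
    by_cases hω : ω ∈ {ω' | B ω' < Φ ω'}
    · rw [hg, hρ]; simp only [Set.indicator_of_mem hω, one_mul]
    · rw [hg, hρ]; simp only [Set.indicator_of_notMem hω, zero_mul, ENNReal.ofReal_zero]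
  have hf_int : Integrable (Set.indicator {ω | A ω < Φ ω} (fun _ => (1 : ℝ))) P :=
    (integrable_const (1 : ℝ)).indicator hTm
  have hg_int : Integrable g P := by
    refine Integrable.mono' (integrable_const (1 : ℝ)) hg_meas_mF.aestronglyMeasurable ?_
    refine Filter.Eventually.of_forall fun ω => ?_
    rw [Real.norm_eq_abs, abs_of_nonneg (hg_nonneg ω)]
    by_cases hω : ω ∈ {ω' | B ω' < Φ ω'}
    · rw [hg]; simp only [Set.indicator_of_mem hω, one_mul]
      refine Real.exp_le_one_iff.mpr ?_
      have := hBA ω; linarith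
    · rw [hg]; simp only [Set.indicator_of_notMem hω, zero_mul]; exact zero_le_one
  have hg_eq : ∀ s, MeasurableSet[G ⊔ H] s → P s < ⊤ →
      ∫ x in s, g x ∂P
        = ∫ x in s, Set.indicator {ω | A ω < Φ ω} (fun _ => (1 : ℝ)) x ∂P := by
    intro s hs _
    have hsmF : MeasurableSet[mF] s := hm _ hs
    have hR : ∫ x in s, Set.indicator {ω | A ω < Φ ω} (fun _ => (1 : ℝ)) x ∂P
        = (P (s ∩ {ω | A ω < Φ ω})).toReal := by
      rw [← integral_indicator hsmF]
      have he : s.indicator (Set.indicator {ω | A ω < Φ ω} fun _ => (1 : ℝ))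
          = (s ∩ {ω | A ω < Φ ω}).indicator fun _ => (1 : ℝ) := by
        funext ω
        by_cases h1 : ω ∈ s <;> by_cases h2 : ω ∈ {ω' | A ω' < Φ ω'} <;>
          simp [Set.indicator_apply, Set.mem_inter_iff, h1, h2]
      rw [he, integral_indicator_const (1 : ℝ) (hsmF.inter hTm)]
      simp [Measure.real]
    have hL : ∫ x in s, g x ∂P = (∫⁻ x in s, ρ x ∂P).toReal := by
      rw [integral_eq_lintegral_of_nonneg_ae
        (Filter.Eventually.of_forall fun ω => hg_nonneg ω)
        hg_meas_mF.aestronglyMeasurable.restrict]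
      congr 1
      exact lintegral_congr fun ω => hg_ofReal ω
    rw [hL, hR, hkey s hs]
  haveI : SigmaFinite (P.trim hm) := inferInstance
  have final := ae_eq_condExp_of_forall_setIntegral_eq hm hf_int
    (fun s _ _ => hg_int.integrableOn) hg_eq
    (hgmeas.stronglyMeasurable.aestronglyMeasurable)
  exact final.symm

/-- **Doubly stochastic survival probability given partial death information.**
`Φ` is exponential with rate 1, independent of the sub-σ-algebra `𝓖`, `A` is a
nonnegative `𝓖`-measurable random variable, `B` is `𝓖`-measurable with
`0 ≤ B ≤ A`, and `𝓗` is the σ-algebra generated by the event `{B < Φ}`.  Then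
`E[1_{A < Φ} | 𝓖 ⊔ 𝓗] = 1_{B < Φ} · e^{-(A - B)}` almost surely. -/
theorem survival_condexp_enlarged {Ω : Type*} {mF : MeasurableSpace Ω}
    (P : Measure Ω) [IsProbabilityMeasure P]
    (Φ : Ω → ℝ) (hΦ : Measurable Φ)
    (hlaw : ∀ s : ℝ, 0 ≤ s → P {ω | s < Φ ω} = ENNReal.ofReal (Real.exp (-s)))
    (G : MeasurableSpace Ω) (hG : G ≤ mF)
    (hindep : Indep (MeasurableSpace.comap Φ inferInstance) G P)
    (A : Ω → ℝ) (hA : Measurable[G] A) (hA0 : ∀ ω, 0 ≤ A ω)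
    (B : Ω → ℝ) (hB : Measurable[G] B) (hB0 : ∀ ω, 0 ≤ B ω) (hBA : ∀ ω, B ω ≤ A ω)
    (H : MeasurableSpace Ω)
    (hH : H = MeasurableSpace.generateFrom {{ω | B ω < Φ ω}}) :
    P[Set.indicator {ω | A ω < Φ ω} (fun _ => (1 : ℝ)) | G ⊔ H]
      =ᵐ[P] fun ω =>
        Set.indicator {ω | B ω < Φ ω} (fun _ => (1 : ℝ)) ω * Real.exp (-(A ω - B ω)) := by
  have hAm : Measurable[mF] A := hA.mono hG le_rfl
  have hBm : Measurable[mF] B := hB.mono hG le_rfl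
  have hSm : MeasurableSet[mF] {ω | B ω < Φ ω} := (hBm.prodMk hΦ) measurableSet_lt'
  have hTm : MeasurableSet[mF] {ω | A ω < Φ ω} := (hAm.prodMk hΦ) measurableSet_lt'
  have hHle : H ≤ mF := by
    rw [hH]
    refine MeasurableSpace.generateFrom_le ?_
    rintro t ht
    rw [Set.mem_singleton_iff] at ht; subst ht
    exact hSm
  have hm : G ⊔ H ≤ mF := sup_le hG hHle
  have hSH : MeasurableSet[H] {ω | B ω < Φ ω} := by
    rw [hH]; exact MeasurableSpace.measurableSet_generateFrom rfl
  have hSm' : MeasurableSet[G ⊔ H] {ω | B ω < Φ ω} :=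
    (le_sup_right : H ≤ G ⊔ H) _ hSH
  have hTS : ∀ ω, ω ∈ {ω | A ω < Φ ω} → ω ∈ {ω | B ω < Φ ω} := fun ω h =>
    lt_of_le_of_lt (hBA ω) h
  set ρ : Ω → ℝ≥0∞ :=
    Set.indicator {ω' | B ω' < Φ ω'}
      (fun ω' => ENNReal.ofReal (Real.exp (-(A ω' - B ω')))) with hρ
  have hρm : Measurable[mF] ρ :=
    (ENNReal.measurable_ofReal.comp (Real.measurable_exp.comp (hAm.sub hBm).neg)).indicator hSm
  have hkeyP : ∀ s, MeasurableSet[G] s →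
      P (s ∩ {ω | A ω < Φ ω}) = ∫⁻ ω in s, ρ ω ∂P := fun s hs =>
    survival_setkey G hG P Φ hΦ hlaw hindep A hA hA0 B hB hB0 hBA s hs
  have hρ_le : ∀ ω, ρ ω ≤ 1 := by
    intro ω
    by_cases hω : ω ∈ {ω' | B ω' < Φ ω'}
    · rw [hρ, Set.indicator_of_mem hω]
      refine ENNReal.ofReal_le_one.mpr ?_
      refine Real.exp_le_one_iff.mpr ?_
      have := hBA ω; linarith
    · rw [hρ, Set.indicator_of_notMem hω]; exact zero_le_one
  haveI : IsFiniteMeasure (P.withDensity ρ) := by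
    refine isFiniteMeasure_withDensity ?_
    refine ne_of_lt (lt_of_le_of_lt (lintegral_mono hρ_le) ?_)
    simp [lintegral_one]
  set C : Set (Set Ω) :=
    {u | ∃ s, MeasurableSet[G] s ∧ (u = s ∨ u = s ∩ {ω | B ω < Φ ω})} with hCdef
  have hgen : G ⊔ H = MeasurableSpace.generateFrom C := by
    refine le_antisymm (sup_le ?_ ?_) (MeasurableSpace.generateFrom_le ?_)
    · intro s hs
      exact MeasurableSpace.measurableSet_generateFrom ⟨s, hs, Or.inl rfl⟩
    · rw [hH]
      refine MeasurableSpace.generateFrom_le ?_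
      rintro t ht
      rw [Set.mem_singleton_iff] at ht; subst ht
      exact MeasurableSpace.measurableSet_generateFrom
        ⟨Set.univ, MeasurableSet.univ, Or.inr (Set.univ_inter _).symm⟩
    · rintro u ⟨s, hs, (rfl | rfl)⟩
      · exact (le_sup_left : G ≤ G ⊔ H) _ hs
      · exact ((le_sup_left : G ≤ G ⊔ H) _ hs).inter hSm'
  have hpi : IsPiSystem C := by
    rintro u ⟨s, hs, hu⟩ v ⟨t, ht, hv⟩ _
    refine ⟨s ∩ t, hs.inter ht, ?_⟩
    rcases hu with rfl | rfl <;> rcases hv with rfl | rfl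
    · exact Or.inl rfl
    · refine Or.inr ?_; ext ω; simp only [Set.mem_inter_iff]; tauto
    · refine Or.inr ?_; ext ω; simp only [Set.mem_inter_iff]; tauto
    · refine Or.inr ?_; ext ω; simp only [Set.mem_inter_iff]; tauto
  have hmemC : ∀ u ∈ C, MeasurableSet[G ⊔ H] u := by
    rw [hgen]; exact fun u hu => MeasurableSpace.measurableSet_generateFrom hu
  have hvalC : ∀ u ∈ C, P (u ∩ {ω | A ω < Φ ω}) = ∫⁻ ω in u, ρ ω ∂P := by
    intro u hu
    simp only [hCdef, Set.mem_setOf_eq] at hu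
    obtain ⟨s, hs, hu2⟩ := hu
    rcases hu2 with h | h
    · rw [h]; exact hkeyP s hs
    · rw [h]
      have hsm : MeasurableSet[mF] s := hG _ hs
      have h1 : s ∩ {ω | B ω < Φ ω} ∩ {ω | A ω < Φ ω} = s ∩ {ω | A ω < Φ ω} := by
        ext ω; simp only [Set.mem_inter_iff]
        constructor
        · rintro ⟨⟨h1, _⟩, h2⟩; exact ⟨h1, h2⟩
        · rintro ⟨h1, h2⟩; exact ⟨⟨h1, hTS ω h2⟩, h2⟩
      have h2 : ∫⁻ ω in s ∩ {ω | B ω < Φ ω}, ρ ω ∂P = ∫⁻ ω in s, ρ ω ∂P := by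
        rw [← lintegral_indicator (hsm.inter hSm), ← lintegral_indicator hsm]
        refine lintegral_congr fun ω => ?_
        by_cases h1 : ω ∈ s <;> by_cases h2 : ω ∈ {ω' | B ω' < Φ ω'} <;>
          simp [hρ, Set.indicator_apply, Set.mem_inter_iff, h1, h2]
      rw [h1, h2]
      exact hkeyP s hs
  have hmeq : (P.restrict {ω | A ω < Φ ω}).trim hm = (P.withDensity ρ).trim hm := by
    refine @MeasureTheory.ext_of_generate_finite Ω (G ⊔ H) _ _ C hgen hpi ?_ ?_ ?_
    · infer_instance
    · intro u hu
      rw [trim_measurableSet_eq hm (hmemC u hu), trim_measurableSet_eq hm (hmemC u hu),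
        Measure.restrict_apply (hm _ (hmemC u hu)), withDensity_apply ρ (hm _ (hmemC u hu))]
      exact hvalC u hu
    · rw [trim_measurableSet_eq hm MeasurableSet.univ,
        trim_measurableSet_eq hm MeasurableSet.univ,
        Measure.restrict_apply MeasurableSet.univ, withDensity_apply ρ MeasurableSet.univ]
      rw [Set.univ_inter]
      have := hkeyP Set.univ MeasurableSet.univ
      rwa [Set.univ_inter] at this
  have hkey : ∀ E, MeasurableSet[G ⊔ H] E →
      P (E ∩ {ω | A ω < Φ ω}) = ∫⁻ ω in E, ρ ω ∂P := by
    intro E hE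
    calc P (E ∩ {ω | A ω < Φ ω})
        = (P.restrict {ω | A ω < Φ ω}) E := (Measure.restrict_apply (hm _ hE)).symm
      _ = (P.restrict {ω | A ω < Φ ω}).trim hm E := (trim_measurableSet_eq hm hE).symm
      _ = (P.withDensity ρ).trim hm E := by rw [hmeq]
      _ = (P.withDensity ρ) E := trim_measurableSet_eq hm hE
      _ = ∫⁻ ω in E, ρ ω ∂P := withDensity_apply ρ (hm _ hE)
  have hgmeas : Measurable[G ⊔ H] (fun ω =>
      Set.indicator {ω | B ω < Φ ω} (fun _ => (1 : ℝ)) ω * Real.exp (-(A ω - B ω))) := by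
    refine Measurable.mul ?_ ?_
    · exact (@measurable_one ℝ Ω _ (G ⊔ H) _).indicator hSm'
    · exact Real.measurable_exp.comp
        (((hA.mono le_sup_left le_rfl).sub (hB.mono le_sup_left le_rfl)).neg)
  exact survival_final G H hm P Φ hΦ A B hAm hBm hBA hSm' hkey hgmeas
end

section
/- Let S_1, …, S_m : Ω → ℝ be integrable random variables with S_i > 0 almost surely for each i. Define the arithmetic mean A = (1/m) Σ_{i=1}^m S_i and the geometric mean G = (Π_{i=1}^m S_i)^{1/m}. Then G is integrable and for every K' ∈ ℝ: E[(A − K')⁺] ≤ E[(G − K')⁺] + E[A] − E[G]. (This is the paper's arithmetic-geometric mean upper bound for the GAO: C(0,x,T) ≤ g (n−1) P̃(0,T) ( Ẽ[(G_T^{(n−1)} − K')⁺] + Ẽ[A_T^{(n−1)}] − Ẽ[G_T^{(n−1)}] ) =: GAOUB.) -/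
open MeasureTheory

/-- **Arithmetic–geometric mean upper bound for the GAO.**
Let `S_1, …, S_m` be integrable and a.s. positive, `A` their arithmetic mean and `G`
their geometric mean.  Then `G` is integrable and for every strike `K'`,
`E[(A − K')⁺] ≤ E[(G − K')⁺] + E[A] − E[G]`. -/
theorem gao_am_gm_upper_bound {Ω : Type*} {mF : MeasurableSpace Ω}
    (P : Measure Ω) [IsProbabilityMeasure P]
    (m : ℕ) (hm : 1 ≤ m) (S : Fin m → Ω → ℝ) (hS : ∀ i, Integrable (S i) P)
    (hSpos : ∀ i, ∀ᵐ ω ∂P, 0 < S i ω)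
    (A G : Ω → ℝ)
    (hA : A = fun ω => (∑ i, S i ω) / m)
    (hG : G = fun ω => (∏ i, S i ω) ^ ((1 : ℝ) / m)) :
    Integrable G P ∧ ∀ K' : ℝ,
      ∫ ω, max (A ω - K') 0 ∂P
        ≤ (∫ ω, max (G ω - K') 0 ∂P) + (∫ ω, A ω ∂P) - ∫ ω, G ω ∂P := by
  have hm0 : (0 : ℝ) < m := by exact_mod_cast hm
  -- a.e. all S i positive
  have hpos : ∀ᵐ ω ∂P, ∀ i, 0 < S i ω := by
    rw [MeasureTheory.ae_all_iff]; exact hSpos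
  -- key pointwise facts
  have hkey : ∀ᵐ ω ∂P, 0 < G ω ∧ G ω ≤ A ω := by
    filter_upwards [hpos] with ω hω
    have hprod : 0 < ∏ i, S i ω := Finset.prod_pos fun i _ => hω i
    constructor
    · rw [hG]; exact Real.rpow_pos_of_pos hprod _
    · simp only [hG, hA]
      have h1 : (∏ i, S i ω) ^ ((1 : ℝ) / m) = ∏ i, (S i ω) ^ ((1 : ℝ) / m) :=
        (Real.finset_prod_rpow _ _ (fun i _ => (hω i).le) _).symm
      rw [h1]
      have := Real.geom_mean_le_arith_mean_weighted Finset.univ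
        (fun _ : Fin m => (1 : ℝ) / m) (fun i => S i ω)
        (fun i _ => by positivity)
        (by simp [Finset.sum_const]; field_simp)
        (fun i _ => (hω i).le)
      calc ∏ i, (S i ω) ^ ((1 : ℝ) / m)
          ≤ ∑ i, (1 : ℝ) / m * S i ω := this
        _ = (∑ i, S i ω) / m := by rw [← Finset.mul_sum]; ring
  have hAint : Integrable A P := by
    rw [hA]; exact (integrable_finset_sum _ fun i _ => hS i).div_const _
  have hGmeas : AEStronglyMeasurable G P := by
    rw [hG]
    exact ((Finset.aemeasurable_fun_prod _ fun i _ => (hS i).aemeasurable).pow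
      aemeasurable_const).aestronglyMeasurable
  have hGint : Integrable G P := by
    refine Integrable.mono' hAint hGmeas ?_
    filter_upwards [hkey] with ω ⟨h1, h2⟩
    rw [Real.norm_eq_abs, abs_of_pos h1]; exact h2
  refine ⟨hGint, fun K' => ?_⟩
  have hApart : Integrable (fun ω => max (A ω - K') 0) P :=
    (hAint.sub (integrable_const K')).pos_part
  have hGpart : Integrable (fun ω => max (G ω - K') 0) P :=
    (hGint.sub (integrable_const K')).pos_part
  have hmono : ∫ ω, (max (A ω - K') 0 + G ω) ∂P ≤ ∫ ω, (max (G ω - K') 0 + A ω) ∂P := by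
    refine integral_mono_ae (hApart.add hGint) (hGpart.add hAint) ?_
    filter_upwards [hkey] with ω ⟨h1, h2⟩
    have : max (A ω - K') 0 ≤ max (G ω - K') 0 + (A ω - G ω) := by
      apply max_le
      · have := le_max_left (G ω - K') 0; linarith
      · have := le_max_right (G ω - K') 0; linarith
    linarith
  rw [integral_add hApart hGint, integral_add hGpart hAint] at hmono
  linarith
end

section
/- For every η ∈ ℝ, the function k ↦ e^{(δ + iη)k} · E[e^Y 1_{{Y ≥ k}}] is integrable on ℝ (with respect to Lebesgue measure, as a ℂ-valued function) and ∫_ℝ e^{(δ + iη)k} E[e^Y 1_{{Y ≥ k}}] dk = E[e^{(δ + 1 + iη) Y}] / (δ + iη). (This is the computation of Ψ_T^{G_1} in the proof of the paper's Fourier-pricing proposition, with k = ln K'.) -/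
open MeasureTheory Complex

open Set Filter

lemma aux_integrableOn_rexp_Iic {d : ℝ} (hd : 0 < d) (b : ℝ) :
    IntegrableOn (fun x : ℝ => Real.exp (d * x)) (Iic b) := by
  have hcont : Continuous fun x : ℝ => Real.exp (d * x) := by continuity
  have hderiv : ∀ x : ℝ, HasDerivAt (fun y : ℝ => Real.exp (d * y) / d)
      (Real.exp (d * x)) x := by
    intro x
    have h1 : HasDerivAt (fun y : ℝ => d * y) d x := by
      simpa using (hasDerivAt_id x).const_mul d
    have h2 := h1.exp.div_const d
    simpa [mul_div_cancel_right₀ _ hd.ne'] using h2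
  apply MeasureTheory.integrableOn_Iic_of_intervalIntegral_norm_bounded
    (Real.exp (d * b) / d) b (fun i : ℝ => hcont.integrableOn_Ioc) tendsto_id
  filter_upwards [eventually_le_atBot b] with i hi
  have hint : ∫ x in i..b, Real.exp (d * x)
      = Real.exp (d * b) / d - Real.exp (d * i) / d :=
    intervalIntegral.integral_eq_sub_of_hasDerivAt (fun x _ => hderiv x)
      (hcont.intervalIntegrable i b)
  have : (∫ x in i..b, ‖Real.exp (d * x)‖) = ∫ x in i..b, Real.exp (d * x) := by
    simp [Real.norm_eq_abs, abs_of_pos (Real.exp_pos _)]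
  simp only [id]; rw [this, hint]
  have h3 := (Real.exp_pos (d * i)).le
  have h4 : 0 ≤ Real.exp (d * i) / d := by positivity
  linarith

lemma aux_integrableOn_cexp_Iic {c : ℂ} (hc : 0 < c.re) (b : ℝ) :
    IntegrableOn (fun x : ℝ => Complex.exp (c * x)) (Iic b) := by
  have hmeas : AEStronglyMeasurable (fun x : ℝ => Complex.exp (c * x))
      (volume.restrict (Iic b)) :=
    (Complex.continuous_exp.comp
      (continuous_const.mul Complex.continuous_ofReal)).aestronglyMeasurable
  refine (aux_integrableOn_rexp_Iic hc b).mono' hmeas ?_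
  filter_upwards with x
  rw [Complex.norm_exp]
  simp [Complex.mul_re]

lemma aux_integral_cexp_Iic {c : ℂ} (hc : 0 < c.re) (b : ℝ) :
    ∫ x in Iic b, Complex.exp (c * x) = Complex.exp (c * b) / c := by
  have hc0 : c ≠ 0 := by
    intro h; rw [h] at hc; simp at hc
  have hderiv : ∀ x : ℝ, HasDerivAt (fun y : ℝ => Complex.exp (c * y) / c)
      (Complex.exp (c * x)) x := by
    intro x
    have h1 : HasDerivAt (fun y : ℝ => c * (y : ℂ)) c x := by
      simpa using (Complex.ofRealCLM.hasDerivAt (x := x)).const_mul c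
    have h2 := h1.cexp.div_const c
    simpa [mul_div_cancel_right₀ _ hc0] using h2
  have htend : Tendsto (fun x : ℝ => Complex.exp (c * x) / c) atBot (nhds 0) := by
    rw [tendsto_zero_iff_norm_tendsto_zero]
    have heq : (fun x : ℝ => ‖Complex.exp (c * x) / c‖)
        = fun x : ℝ => Real.exp (c.re * x) / ‖c‖ := by
      funext x
      rw [norm_div, Complex.norm_exp]
      simp [Complex.mul_re]
    rw [heq]
    have h5 : Tendsto (fun x : ℝ => c.re * x) atBot atBot :=
      tendsto_id.const_mul_atBot hc
    simpa using (Real.tendsto_exp_atBot.comp h5).div_const ‖c‖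
  have h6 := integral_Iic_of_hasDerivAt_of_tendsto' (fun x _ => hderiv x)
    (aux_integrableOn_cexp_Iic hc b) htend
  simpa using h6

lemma aux_integral_rexp_Iic {d : ℝ} (hd : 0 < d) (b : ℝ) :
    ∫ x in Iic b, Real.exp (d * x) = Real.exp (d * b) / d := by
  have hderiv : ∀ x : ℝ, HasDerivAt (fun y : ℝ => Real.exp (d * y) / d)
      (Real.exp (d * x)) x := by
    intro x
    have h1 : HasDerivAt (fun y : ℝ => d * y) d x := by
      simpa using (hasDerivAt_id x).const_mul d
    have h2 := h1.exp.div_const d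
    simpa [mul_div_cancel_right₀ _ hd.ne'] using h2
  have htend : Tendsto (fun x : ℝ => Real.exp (d * x) / d) atBot (nhds 0) := by
    have h5 : Tendsto (fun x : ℝ => d * x) atBot atBot :=
      tendsto_id.const_mul_atBot hd
    simpa using (Real.tendsto_exp_atBot.comp h5).div_const d
  have h6 := integral_Iic_of_hasDerivAt_of_tendsto' (fun x _ => hderiv x)
    (aux_integrableOn_rexp_Iic hd b) htend
  simpa using h6

/-- **Computation of Ψ_T^{G₁} in the Fourier pricing proposition.**
If `E[e^{(δ+1)Y}] < ∞` with `δ > 0`, then for every `η ∈ ℝ` the function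
`k ↦ e^{(δ+iη)k} E[e^Y 1_{Y ≥ k}]` is Lebesgue-integrable on `ℝ` and its integral
equals `E[e^{(δ+1+iη)Y}] / (δ + iη)`. -/
theorem fourier_psi_G1 {Ω : Type*} {mF : MeasurableSpace Ω}
    (P : Measure Ω) [IsProbabilityMeasure P]
    (Y : Ω → ℝ) (hY : Measurable Y) (δ : ℝ) (hδ : 0 < δ)
    (hint : Integrable (fun ω => Real.exp ((δ + 1) * Y ω)) P) (η : ℝ) :
    Integrable (fun k : ℝ => Complex.exp (((δ : ℂ) + η * Complex.I) * k) *
        ((∫ ω in {ω | k ≤ Y ω}, Real.exp (Y ω) ∂P : ℝ) : ℂ)) ∧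
      ∫ k : ℝ, Complex.exp (((δ : ℂ) + η * Complex.I) * k) *
          ((∫ ω in {ω | k ≤ Y ω}, Real.exp (Y ω) ∂P : ℝ) : ℂ)
        = (∫ ω, Complex.exp (((δ : ℂ) + 1 + η * Complex.I) * Y ω) ∂P)
            / ((δ : ℂ) + η * Complex.I) := by
  classical
  set c : ℂ := (δ : ℂ) + η * Complex.I with hcdef
  have hcre : c.re = δ := by simp [hcdef]
  have hcpos : 0 < c.re := hcre ▸ hδ
  set g : ℝ × Ω → ℂ := fun p =>
    if p.1 ≤ Y p.2 then Complex.exp (c * p.1) * (Real.exp (Y p.2) : ℂ) else 0 with hgdef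
  have hS : MeasurableSet {p : ℝ × Ω | p.1 ≤ Y p.2} :=
    measurableSet_le measurable_fst (hY.comp measurable_snd)
  have hgm : AEStronglyMeasurable g ((volume : Measure ℝ).prod P) := by
    apply Measurable.aestronglyMeasurable
    apply Measurable.ite hS _ measurable_const
    exact (Complex.measurable_exp.comp
        ((Complex.measurable_ofReal.comp measurable_fst).const_mul c)).mul
      (Complex.measurable_ofReal.comp (Real.measurable_exp.comp (hY.comp measurable_snd)))
  have hslice : ∀ ω, (fun k => g (k, ω)) = (Iic (Y ω)).indicator
      (fun k => Complex.exp (c * k) * (Real.exp (Y ω) : ℂ)) := by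
    intro ω; funext k; simp [hgdef, Set.indicator_apply, mem_Iic]
  have hnormint : ∀ ω, (∫ k, ‖g (k, ω)‖) = Real.exp ((δ + 1) * Y ω) / δ := by
    intro ω
    have heq : (fun k : ℝ => ‖g (k, ω)‖) = (Iic (Y ω)).indicator
        (fun k => Real.exp (δ * k) * Real.exp (Y ω)) := by
      funext k
      by_cases h : k ≤ Y ω
      · simp only [hgdef, Set.indicator_apply, mem_Iic, h, if_true, if_pos]
        rw [norm_mul, Complex.norm_exp,
          Complex.norm_real, Real.norm_eq_abs, abs_of_pos (Real.exp_pos _)]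
        congr 2
        simp [Complex.mul_re, hcre]
      · simp [hgdef, Set.indicator_apply, mem_Iic, h]
    rw [heq, integral_indicator measurableSet_Iic, integral_mul_const,
      aux_integral_rexp_Iic hδ]
    rw [div_mul_eq_mul_div, ← Real.exp_add]
    congr 2
    ring
  have hg_int : Integrable g ((volume : Measure ℝ).prod P) := by
    rw [MeasureTheory.integrable_prod_iff' hgm]
    constructor
    · filter_upwards with ω
      rw [hslice ω]
      exact (integrable_indicator_iff measurableSet_Iic).2
        ((aux_integrableOn_cexp_Iic hcpos _).mul_const _)
    · have : (fun ω => ∫ k, ‖g (k, ω)‖) = fun ω => Real.exp ((δ + 1) * Y ω) / δ :=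
        funext hnormint
      rw [this]
      exact hint.div_const δ
  have hkey : ∀ k : ℝ, (∫ ω, g (k, ω) ∂P)
      = Complex.exp (c * k) * ((∫ ω in {ω | k ≤ Y ω}, Real.exp (Y ω) ∂P : ℝ) : ℂ) := by
    intro k
    have heq : (fun ω => g (k, ω)) = {ω | k ≤ Y ω}.indicator
        (fun ω => Complex.exp (c * k) * (Real.exp (Y ω) : ℂ)) := by
      funext ω; simp [hgdef, Set.indicator_apply]
    have hSm : MeasurableSet {ω | k ≤ Y ω} := hY measurableSet_Ici
    rw [heq, integral_indicator hSm, MeasureTheory.integral_const_mul]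
    congr 1
    exact (integral_ofReal (𝕜 := ℂ) (f := fun ω => Real.exp (Y ω)) (μ := P.restrict {ω | k ≤ Y ω}))
  have hinner : ∀ ω, (∫ k, g (k, ω)) = Complex.exp ((c + 1) * Y ω) / c := by
    intro ω
    rw [hslice ω, integral_indicator measurableSet_Iic, integral_mul_const,
      aux_integral_cexp_Iic hcpos]
    rw [div_mul_eq_mul_div]
    congr 2
    rw [Complex.ofReal_exp, ← Complex.exp_add]
    congr 1
    ring
  constructor
  · exact hg_int.integral_prod_left.congr (Filter.Eventually.of_forall fun k => hkey k)
  · have hswap : (∫ k : ℝ, ∫ ω, g (k, ω) ∂P) = ∫ ω, (∫ k : ℝ, g (k, ω)) ∂P :=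
      MeasureTheory.integral_integral_swap hg_int
    have hc1 : (c : ℂ) + 1 = (δ : ℂ) + 1 + η * Complex.I := by rw [hcdef]; ring
    calc (∫ k : ℝ, Complex.exp (((δ : ℂ) + η * Complex.I) * k) *
          ((∫ ω in {ω | k ≤ Y ω}, Real.exp (Y ω) ∂P : ℝ) : ℂ))
        = ∫ k : ℝ, ∫ ω, g (k, ω) ∂P := by
          congr 1; funext k; exact (hkey k).symm
      _ = ∫ ω, (∫ k : ℝ, g (k, ω)) ∂P := hswap
      _ = ∫ ω, Complex.exp ((c + 1) * Y ω) / c ∂P := by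
          congr 1; funext ω; exact hinner ω
      _ = (∫ ω, Complex.exp ((c + 1) * Y ω) ∂P) / c := integral_div c _
      _ = (∫ ω, Complex.exp (((δ : ℂ) + 1 + η * Complex.I) * Y ω) ∂P)
            / ((δ : ℂ) + η * Complex.I) := by rw [hc1]
end

section
/- For every η ∈ ℝ, the function k ↦ e^{(δ + iη)k} · e^k · P(Y ≥ k) is integrable on ℝ (with respect to Lebesgue measure, as a ℂ-valued function) and ∫_ℝ e^{(δ + iη)k} e^k P(Y ≥ k) dk = E[e^{(δ + 1 + iη) Y}] / (δ + 1 + iη). (This is the computation of Ψ_T^{G_2} in the proof of the paper's Fourier-pricing proposition, with k = ln K'.) -/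
open MeasureTheory Complex Set Filter

/-- Integrability of `exp (c*k)` on `Iic y` for `c > 0`. -/
lemma aux_integrableOn_exp_mul_Iic {c : ℝ} (hc : 0 < c) (y : ℝ) :
    IntegrableOn (fun k : ℝ => Real.exp (c * k)) (Iic y) := by
  apply integrableOn_Iic_of_intervalIntegral_norm_bounded (Real.exp (c * y) / c) y
    (a := fun i : ℝ => i) (l := atBot)
    (fun i => ((by fun_prop : Continuous fun k : ℝ => Real.exp (c * k))).integrableOn_Ioc)
    tendsto_id
  filter_upwards with i
  have : (∫ x in i..y, ‖Real.exp (c * x)‖) = ∫ x in i..y, Real.exp (c * x) := by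
    simp [Real.norm_eq_abs, abs_of_pos (Real.exp_pos _)]
  rw [this, intervalIntegral.integral_comp_mul_left (fun x => Real.exp x) hc.ne']
  rw [integral_exp]
  rw [smul_eq_mul, inv_mul_eq_div, div_le_div_iff_of_pos_right hc]
  have := Real.exp_pos (c * i)
  linarith

/-- Value of `∫_{-∞}^y exp (c*k) dk` for `c > 0`. -/
lemma aux_integral_exp_mul_Iic {c : ℝ} (hc : 0 < c) (y : ℝ) :
    ∫ k in Iic y, Real.exp (c * k) = Real.exp (c * y) / c := by
  refine tendsto_nhds_unique
    (intervalIntegral_tendsto_integral_Iic y (aux_integrableOn_exp_mul_Iic hc y)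
      (tendsto_id (α := ℝ)) (l := atBot)) ?_
  have h : ∀ i : ℝ, (∫ x in i..y, Real.exp (c * x)) =
      Real.exp (c * y) / c - Real.exp (c * i) / c := by
    intro i
    rw [intervalIntegral.integral_comp_mul_left (fun x => Real.exp x) hc.ne',
      integral_exp, smul_eq_mul]
    ring
  simp_rw [h]
  have h2 : Tendsto (fun i : ℝ => Real.exp (c * i) / c) atBot (nhds 0) := by
    have : Tendsto (fun i : ℝ => c * i) atBot atBot :=
      (tendsto_const_mul_atBot_of_pos hc).mpr tendsto_id
    simpa using (Real.tendsto_exp_atBot.comp this).div_const c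
  simpa using tendsto_const_nhds.sub h2

lemma aux_norm_cexp (z : ℂ) (k : ℝ) :
    ‖Complex.exp (z * k)‖ = Real.exp (z.re * k) := by
  rw [Complex.norm_exp]
  congr 1
  simp [Complex.mul_re]

/-- Integrability of `cexp (z*k)` on `Iic y` for `0 < z.re`. -/
lemma aux_integrableOn_cexp_Iic_s10 {z : ℂ} (hz : 0 < z.re) (y : ℝ) :
    IntegrableOn (fun k : ℝ => Complex.exp (z * k)) (Iic y) := by
  refine Integrable.mono' (aux_integrableOn_exp_mul_Iic hz y)
    ((Complex.continuous_exp.comp (continuous_const.mul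
      Complex.continuous_ofReal)).aestronglyMeasurable) ?_
  filter_upwards with k
  rw [aux_norm_cexp]

/-- Value of `∫_{-∞}^y cexp (z*k) dk` for `0 < z.re`. -/
lemma aux_integral_cexp_Iic_s10 {z : ℂ} (hz : 0 < z.re) (y : ℝ) :
    ∫ k in Iic y, Complex.exp (z * k) = Complex.exp (z * y) / z := by
  have hzne : z ≠ 0 := fun h => by simp [h] at hz
  refine tendsto_nhds_unique
    (intervalIntegral_tendsto_integral_Iic y (aux_integrableOn_cexp_Iic_s10 hz y)
      (tendsto_id (α := ℝ)) (l := atBot)) ?_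
  have h : ∀ i : ℝ, (∫ x in i..y, Complex.exp (z * x)) =
      Complex.exp (z * y) / z - Complex.exp (z * i) / z := by
    intro i
    rw [integral_exp_mul_complex hzne]
    ring
  simp_rw [h]
  have h2 : Tendsto (fun i : ℝ => Complex.exp (z * i) / z) atBot (nhds 0) := by
    rw [tendsto_zero_iff_norm_tendsto_zero]
    simp_rw [norm_div, aux_norm_cexp]
    have : Tendsto (fun i : ℝ => z.re * i) atBot atBot :=
      (tendsto_const_mul_atBot_of_pos hz).mpr tendsto_id
    simpa using (Real.tendsto_exp_atBot.comp this).div_const ‖z‖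
  simpa using tendsto_const_nhds.sub h2

/-- **Computation of Ψ_T^{G₂} in the Fourier pricing proposition.**
If `E[e^{(δ+1)Y}] < ∞` with `δ > 0`, then for every `η ∈ ℝ` the function
`k ↦ e^{(δ+iη)k} e^k P(Y ≥ k)` is Lebesgue-integrable on `ℝ` and its integral
equals `E[e^{(δ+1+iη)Y}] / (δ + 1 + iη)`. -/
theorem fourier_psi_G2 {Ω : Type*} {mF : MeasurableSpace Ω}
    (P : Measure Ω) [IsProbabilityMeasure P]
    (Y : Ω → ℝ) (hY : Measurable Y) (δ : ℝ) (hδ : 0 < δ)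
    (hint : Integrable (fun ω => Real.exp ((δ + 1) * Y ω)) P) (η : ℝ) :
    Integrable (fun k : ℝ => Complex.exp (((δ : ℂ) + η * Complex.I) * k) *
        (Real.exp k : ℂ) * ((P {ω | k ≤ Y ω}).toReal : ℂ)) ∧
      ∫ k : ℝ, Complex.exp (((δ : ℂ) + η * Complex.I) * k) *
          (Real.exp k : ℂ) * ((P {ω | k ≤ Y ω}).toReal : ℂ)
        = (∫ ω, Complex.exp (((δ : ℂ) + 1 + η * Complex.I) * Y ω) ∂P)
            / ((δ : ℂ) + 1 + η * Complex.I) := by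
  set z : ℂ := (δ : ℂ) + 1 + η * Complex.I with hzdef
  have hzre : z.re = δ + 1 := by simp [hzdef]
  have hzrepos : 0 < z.re := by rw [hzre]; linarith
  have hzne : z ≠ 0 := fun h => by rw [h] at hzrepos; simp at hzrepos
  -- rewrite the integrand
  have hrw : ∀ k : ℝ, Complex.exp (((δ : ℂ) + η * Complex.I) * k) *
      (Real.exp k : ℂ) * ((P {ω | k ≤ Y ω}).toReal : ℂ)
      = Complex.exp (z * k) * ((P {ω | k ≤ Y ω}).toReal : ℂ) := by
    intro k
    rw [Complex.ofReal_exp, ← Complex.exp_add]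
    congr 2; rw [hzdef]; ring
  -- the two-variable function
  set f : ℝ × Ω → ℂ := fun p =>
    Set.indicator {p : ℝ × Ω | p.1 ≤ Y p.2} (fun p => Complex.exp (z * p.1)) p with hfdef
  have hS : MeasurableSet {p : ℝ × Ω | p.1 ≤ Y p.2} :=
    measurableSet_le measurable_fst (hY.comp measurable_snd)
  have hfmeas : AEStronglyMeasurable f ((volume : Measure ℝ).prod P) := by
    apply Measurable.aestronglyMeasurable
    exact (Complex.measurable_exp.comp
      (measurable_const.mul (Complex.measurable_ofReal.comp measurable_fst))).indicator hS
  have hslice : ∀ ω : Ω, (fun k => f (k, ω)) =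
      Set.indicator (Iic (Y ω)) (fun k => Complex.exp (z * k)) := by
    intro ω
    ext k
    by_cases h : k ≤ Y ω <;>
      simp [hfdef, Set.indicator_apply, h]
  -- integrability of f on the product
  have hfint : Integrable f ((volume : Measure ℝ).prod P) := by
    rw [integrable_prod_iff' hfmeas]
    constructor
    · filter_upwards with ω
      rw [hslice ω]
      rw [integrable_indicator_iff measurableSet_Iic]
      exact aux_integrableOn_cexp_Iic_s10 hzrepos (Y ω)
    · have hcalc : ∀ ω : Ω, (∫ k : ℝ, ‖f (k, ω)‖) =
          Real.exp ((δ + 1) * Y ω) / (δ + 1) := by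
        intro ω
        have : (fun k : ℝ => ‖f (k, ω)‖) =
            Set.indicator (Iic (Y ω)) (fun k => Real.exp ((δ + 1) * k)) := by
          ext k
          rw [show f (k, ω) = ((Iic (Y ω)).indicator fun k => Complex.exp (z * k)) k from
            congrFun (hslice ω) k]
          by_cases h : k ≤ Y ω <;>
            simp [Set.indicator_apply, h, Complex.norm_exp, Complex.mul_re, hzre]
        rw [this, integral_indicator measurableSet_Iic,
          aux_integral_exp_mul_Iic (by linarith) (Y ω)]
      simp_rw [hcalc]
      exact hint.div_const _
  -- the slice integrals over Ω
  have hmarg : ∀ k : ℝ, (∫ ω, f (k, ω) ∂P) =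
      Complex.exp (z * k) * ((P {ω | k ≤ Y ω}).toReal : ℂ) := by
    intro k
    have : (fun ω => f (k, ω)) =
        Set.indicator {ω | k ≤ Y ω} (fun _ => Complex.exp (z * k)) := by
      ext ω
      by_cases h : k ≤ Y ω <;> simp [hfdef, Set.indicator_apply, h]
    rw [this, integral_indicator_const _ (measurableSet_le measurable_const hY)]
    simp [mul_comm, Measure.real]
  -- integrability of the target
  have hint1 : Integrable (fun k : ℝ => Complex.exp (((δ : ℂ) + η * Complex.I) * k) *
      (Real.exp k : ℂ) * ((P {ω | k ≤ Y ω}).toReal : ℂ)) := by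
    have := hfint.integral_prod_left
    refine this.congr ?_
    filter_upwards with k
    rw [hrw k, ← hmarg k]
  refine ⟨hint1, ?_⟩
  -- compute the integral via Fubini
  calc ∫ k : ℝ, Complex.exp (((δ : ℂ) + η * Complex.I) * k) *
          (Real.exp k : ℂ) * ((P {ω | k ≤ Y ω}).toReal : ℂ)
      = ∫ k : ℝ, ∫ ω, f (k, ω) ∂P := by
        congr 1; ext k; rw [hrw k, ← hmarg k]
    _ = ∫ ω, (∫ k : ℝ, f (k, ω)) ∂P := integral_integral_swap hfint
    _ = ∫ ω, Complex.exp (z * Y ω) / z ∂P := by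
        congr 1; ext ω
        rw [hslice ω, integral_indicator measurableSet_Iic,
          aux_integral_cexp_Iic_s10 hzrepos (Y ω)]
    _ = (∫ ω, Complex.exp (z * Y ω) ∂P) / z := by
        rw [integral_div]
end

section
/- For every η ∈ ℝ, the function k ↦ e^{(δ + iη)k} · E[(e^Y − e^k)⁺] is integrable on ℝ (with respect to Lebesgue measure, as a ℂ-valued function) and ∫_ℝ e^{(δ + iη)k} E[(e^Y − e^k)⁺] dk = E[e^{(δ + 1 + iη) Y}] / ((δ + iη)(δ + 1 + iη)). (This is the paper's formula for the damped Fourier transform Ψ_T^G(η; δ) of the geometric-basket call price E[(G_T^{(n−1)} − K')⁺] with respect to k = ln K', whose denominator δ² + δ − η² + iη(2δ+1) factors as (δ + iη)(δ + 1 + iη).) -/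
open MeasureTheory Complex

open Set Filter

private lemma rexp_intOn {c : ℝ} (hc : 0 < c) (a : ℝ) :
    IntegrableOn (fun k : ℝ => Real.exp (c * k)) (Iic a) := by
  have h1 : IntegrableOn (fun x : ℝ => Real.exp (-c * x)) (Ioi (-a)) :=
    exp_neg_integrableOn_Ioi _ hc
  rw [← integrable_indicator_iff measurableSet_Ioi] at h1
  have h2 := h1.comp_neg
  rw [← integrable_indicator_iff measurableSet_Iic]
  apply h2.congr
  filter_upwards [compl_mem_ae_iff.mpr (measure_singleton a)] with x hx
  rcases lt_trichotomy x a with h | h | h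
  · rw [indicator_of_mem (mem_Ioi.mpr (neg_lt_neg h)), indicator_of_mem (mem_Iic.mpr h.le)]
    ring_nf
  · exact absurd h hx
  · rw [indicator_of_notMem (by simp [h.le]), indicator_of_notMem (by simp [h])]

private lemma cexp_intOn {w : ℂ} (hw : 0 < w.re) (a : ℝ) :
    IntegrableOn (fun k : ℝ => Complex.exp (w * k)) (Iic a) := by
  refine Integrable.mono (rexp_intOn hw a) ?_ ?_
  · exact (Complex.continuous_exp.comp (continuous_const.mul Complex.continuous_ofReal)).aestronglyMeasurable
  · filter_upwards with k
    simp only [Complex.norm_exp]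
    have : (w * (k : ℂ)).re = w.re * k := by simp
    rw [this, Real.norm_eq_abs, _root_.abs_of_nonneg (Real.exp_pos _).le]

private lemma cexp_tendsto {w : ℂ} (hw : 0 < w.re) :
    Tendsto (fun k : ℝ => Complex.exp (w * k) / w) atBot (nhds 0) := by
  rw [tendsto_zero_iff_norm_tendsto_zero]
  have heq : ∀ k : ℝ, ‖Complex.exp (w * k) / w‖ = Real.exp (w.re * k) / ‖w‖ := by
    intro k
    rw [norm_div]
    congr 1
    simp only [Complex.norm_exp]
    congr 1
    simp
  simp only [heq]
  have h1 : Tendsto (fun k : ℝ => w.re * k) atBot atBot :=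
    Tendsto.const_mul_atBot hw tendsto_id
  have := (Real.tendsto_exp_atBot.comp h1).div_const ‖w‖
  simpa [Function.comp] using this

private lemma cexp_integral {w : ℂ} (hw : 0 < w.re) (a : ℝ) :
    ∫ k in Iic a, Complex.exp (w * k) = Complex.exp (w * a) / w := by
  have hw0 : w ≠ 0 := fun h => by simp [h] at hw
  have hderiv : ∀ x ∈ Iic a, HasDerivAt (fun k : ℝ => Complex.exp (w * k) / w)
      (Complex.exp (w * x)) x := by
    intro x _
    have h1 : HasDerivAt (fun s : ℂ => Complex.exp (w * s) / w)
        (Complex.exp (w * x)) (x : ℂ) := by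
      have h2 : HasDerivAt (fun s : ℂ => w * s) w (x : ℂ) := by
        simpa using (hasDerivAt_id (x : ℂ)).const_mul w
      have h3 := h2.cexp
      have h4 := h3.div_const w
      have h5 : Complex.exp (w * (x : ℂ)) * w / w = Complex.exp (w * x) := by
        field_simp
      rw [← h5]
      exact h4
    exact h1.comp_ofReal
  have := integral_Iic_of_hasDerivAt_of_tendsto' hderiv (cexp_intOn hw a) (cexp_tendsto hw)
  rw [this, sub_zero]

private lemma rexp_integral {c : ℝ} (hc : 0 < c) (a : ℝ) :
    ∫ k in Iic a, Real.exp (c * k) = Real.exp (c * a) / c := by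
  have h1 : ∫ x in Ioi (-a), Real.exp (c * (-x)) = ∫ k in Iic a, Real.exp (c * k) := by
    have := integral_comp_neg_Ioi (-a) (fun x : ℝ => Real.exp (c * x))
    simpa using this
  rw [← h1]
  have h2 : (fun x : ℝ => Real.exp (c * (-x))) = fun x : ℝ => Real.exp (-(c * x)) := by
    funext x; ring_nf
  rw [h2]
  have h3 := integral_comp_mul_left_Ioi (fun x : ℝ => Real.exp (-x)) (-a) hc
  simp only [smul_eq_mul] at h3
  rw [h3, integral_exp_neg_Ioi]
  rw [mul_neg, neg_neg]
  field_simp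

private lemma max_indicator (y : ℝ) :
    (fun k : ℝ => max (Real.exp y - Real.exp k) 0) =
      Set.indicator (Iic y) (fun k => Real.exp y - Real.exp k) := by
  funext k
  by_cases h : k ≤ y
  · rw [indicator_of_mem (mem_Iic.mpr h), max_eq_left]
    simpa using Real.exp_le_exp.mpr h
  · rw [indicator_of_notMem (by simpa using h), max_eq_right]
    simp only [sub_nonpos]
    exact (Real.exp_le_exp.mpr (not_le.mp h).le)

private lemma real_call {δ : ℝ} (hδ : 0 < δ) (y : ℝ) :
    Integrable (fun k : ℝ => Real.exp (δ * k) * max (Real.exp y - Real.exp k) 0) ∧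
      ∫ k : ℝ, Real.exp (δ * k) * max (Real.exp y - Real.exp k) 0
        = Real.exp ((δ + 1) * y) / (δ * (δ + 1)) := by
  have hδ1 : (0:ℝ) < δ + 1 := by linarith
  have heq : (fun k : ℝ => Real.exp (δ * k) * max (Real.exp y - Real.exp k) 0) =
      Set.indicator (Iic y) (fun k => Real.exp y * Real.exp (δ * k) - Real.exp ((δ+1) * k)) := by
    funext k
    by_cases h : k ≤ y
    · rw [indicator_of_mem (mem_Iic.mpr h),
        max_eq_left (by simpa using Real.exp_le_exp.mpr h),
        mul_sub, show (δ+1)*k = δ*k+k by ring, Real.exp_add]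
      ring
    · rw [indicator_of_notMem (by simpa using h),
        max_eq_right (by simp [sub_nonpos, Real.exp_le_exp.mpr (not_le.mp h).le]), mul_zero]
  have hInt : IntegrableOn (fun k : ℝ => Real.exp y * Real.exp (δ * k) - Real.exp ((δ+1) * k))
      (Iic y) := ((rexp_intOn hδ y).const_mul _).sub (rexp_intOn hδ1 y)
  constructor
  · rw [heq, integrable_indicator_iff measurableSet_Iic]
    exact hInt
  · rw [heq, integral_indicator measurableSet_Iic,
      integral_sub ((rexp_intOn hδ y).const_mul _) (rexp_intOn hδ1 y),
      MeasureTheory.integral_const_mul, rexp_integral hδ y, rexp_integral hδ1 y,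
      show Real.exp y * (Real.exp (δ * y) / δ) = Real.exp ((δ+1) * y) / δ by
        rw [mul_div_assoc']
        congr 1
        rw [← Real.exp_add]
        congr 1
        ring]
    field_simp
    ring

private lemma complex_call {z : ℂ} (hz : 0 < z.re) (y : ℝ) :
    Integrable (fun k : ℝ => Complex.exp (z * k) *
        ((max (Real.exp y - Real.exp k) 0 : ℝ) : ℂ)) ∧
      ∫ k : ℝ, Complex.exp (z * k) * ((max (Real.exp y - Real.exp k) 0 : ℝ) : ℂ)
        = Complex.exp ((z + 1) * y) / (z * (z + 1)) := by
  have hz1 : (0:ℝ) < (z + 1).re := by simp; linarith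
  have hz0 : z ≠ 0 := fun h => by simp [h] at hz
  have hz10 : z + 1 ≠ 0 := fun h => by rw [h] at hz1; simp at hz1
  have heq : (fun k : ℝ => Complex.exp (z * k) * ((max (Real.exp y - Real.exp k) 0 : ℝ) : ℂ)) =
      Set.indicator (Iic y)
        (fun k : ℝ => (Real.exp y : ℂ) * Complex.exp (z * k) - Complex.exp ((z+1) * k)) := by
    funext k
    by_cases h : k ≤ y
    · rw [indicator_of_mem (mem_Iic.mpr h)]
      rw [max_eq_left (by simpa using Real.exp_le_exp.mpr h)]
      have : Complex.exp ((z+1) * k) = Complex.exp (z * k) * Real.exp k := by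
        rw [show ((z:ℂ)+1) * k = z * k + k by ring, Complex.exp_add]
        norm_cast
      rw [this]
      push_cast
      ring
    · rw [indicator_of_notMem (by simpa using h),
        max_eq_right (by simp [sub_nonpos, Real.exp_le_exp.mpr (not_le.mp h).le])]
      simp
  have hInt : IntegrableOn
      (fun k : ℝ => (Real.exp y : ℂ) * Complex.exp (z * k) - Complex.exp ((z+1) * k))
      (Iic y) := ((cexp_intOn hz y).const_mul _).sub (cexp_intOn hz1 y)
  constructor
  · rw [heq, integrable_indicator_iff measurableSet_Iic]
    exact hInt
  · rw [heq, integral_indicator measurableSet_Iic,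
      integral_sub ((cexp_intOn hz y).const_mul _) (cexp_intOn hz1 y),
      MeasureTheory.integral_const_mul, cexp_integral hz y, cexp_integral hz1 y]
    have hy : (Real.exp y : ℂ) * Complex.exp (z * y) = Complex.exp ((z+1) * y) := by
      rw [show ((z:ℂ)+1) * y = z * y + y by ring, Complex.exp_add]
      push_cast
      ring
    rw [show (Real.exp y : ℂ) * (Complex.exp (z * y) / z) = Complex.exp ((z+1) * y) / z by
      rw [← hy]; ring]
    field_simp
    ring

/-- **Damped Fourier transform of the geometric-basket call price.**
If `E[e^{(δ+1)Y}] < ∞` with `δ > 0`, then for every `η ∈ ℝ` the function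
`k ↦ e^{(δ+iη)k} E[(e^Y − e^k)⁺]` is Lebesgue-integrable on `ℝ` and its integral
equals `E[e^{(δ+1+iη)Y}] / ((δ + iη)(δ + 1 + iη))`. -/
theorem fourier_psi_G {Ω : Type*} {mF : MeasurableSpace Ω}
    (P : Measure Ω) [IsProbabilityMeasure P]
    (Y : Ω → ℝ) (hY : Measurable Y) (δ : ℝ) (hδ : 0 < δ)
    (hint : Integrable (fun ω => Real.exp ((δ + 1) * Y ω)) P) (η : ℝ) :
    Integrable (fun k : ℝ => Complex.exp (((δ : ℂ) + η * Complex.I) * k) *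
        ((∫ ω, max (Real.exp (Y ω) - Real.exp k) 0 ∂P : ℝ) : ℂ)) ∧
      ∫ k : ℝ, Complex.exp (((δ : ℂ) + η * Complex.I) * k) *
          ((∫ ω, max (Real.exp (Y ω) - Real.exp k) 0 ∂P : ℝ) : ℂ)
        = (∫ ω, Complex.exp (((δ : ℂ) + 1 + η * Complex.I) * Y ω) ∂P)
            / (((δ : ℂ) + η * Complex.I) * ((δ : ℂ) + 1 + η * Complex.I)) := by
  set z : ℂ := (δ : ℂ) + η * Complex.I with hzdef
  have hzre : z.re = δ := by simp [hzdef]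
  have hz : 0 < z.re := by rw [hzre]; exact hδ
  have hz1 : ((δ : ℂ) + 1 + η * Complex.I) = z + 1 := by rw [hzdef]; ring
  rw [hz1]
  set F : Ω × ℝ → ℂ := fun p => Complex.exp (z * p.2) *
      ((max (Real.exp (Y p.1) - Real.exp p.2) 0 : ℝ) : ℂ) with hFdef
  have hFmeas : AEStronglyMeasurable F (P.prod volume) := by
    apply Measurable.aestronglyMeasurable
    apply Measurable.mul
    · exact Complex.measurable_exp.comp
        (measurable_const.mul (Complex.measurable_ofReal.comp measurable_snd))
    · exact Complex.measurable_ofReal.comp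
        (((Real.measurable_exp.comp (hY.comp measurable_fst)).sub
          (Real.measurable_exp.comp measurable_snd)).max measurable_const)
  have hnorm : ∀ ω k, ‖F (ω, k)‖ = Real.exp (δ * k) * max (Real.exp (Y ω) - Real.exp k) 0 := by
    intro ω k
    rw [hFdef]
    simp only [norm_mul, Complex.norm_exp]
    have h1 : (z * (k : ℂ)).re = δ * k := by simp [Complex.mul_re, hzre]
    rw [h1, Complex.norm_real, Real.norm_eq_abs, _root_.abs_of_nonneg (le_max_right _ _)]
  have hF : Integrable F (P.prod volume) := by
    rw [integrable_prod_iff hFmeas]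
    constructor
    · exact Filter.Eventually.of_forall fun ω => (complex_call hz (Y ω)).1
    · have heq2 : (fun ω => ∫ k, ‖F (ω, k)‖) =
          fun ω => Real.exp ((δ + 1) * Y ω) / (δ * (δ + 1)) := by
        funext ω
        simp only [hnorm]
        exact (real_call hδ (Y ω)).2
      rw [heq2]
      exact hint.div_const _
  have key : ∀ k : ℝ, (∫ ω, F (ω, k) ∂P) = Complex.exp (z * k) *
      ((∫ ω, max (Real.exp (Y ω) - Real.exp k) 0 ∂P : ℝ) : ℂ) := by
    intro k
    rw [hFdef]
    simp only
    rw [MeasureTheory.integral_const_mul]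
    congr 1
    exact integral_ofReal
  constructor
  · exact hF.integral_prod_right.congr
      (Filter.Eventually.of_forall fun k => key k)
  · calc ∫ k : ℝ, Complex.exp (z * k) *
          ((∫ ω, max (Real.exp (Y ω) - Real.exp k) 0 ∂P : ℝ) : ℂ)
        = ∫ k : ℝ, ∫ ω, F (ω, k) ∂P :=
          integral_congr_ae (Filter.Eventually.of_forall fun k => (key k).symm)
      _ = ∫ ω, (∫ k, F (ω, k)) ∂P :=
          (integral_integral_swap hF).symm
      _ = ∫ ω, Complex.exp ((z + 1) * Y ω) / (z * (z + 1)) ∂P :=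
          integral_congr_ae (Filter.Eventually.of_forall fun ω => (complex_call hz (Y ω)).2)
      _ = (∫ ω, Complex.exp ((z + 1) * Y ω) ∂P) / (z * (z + 1)) := integral_div _ _
end

section
/- Assume in addition that the function η ↦ E[e^{(δ + 1 + iη) Y}] / ((δ + iη)(δ + 1 + iη)) is integrable on ℝ. Then for every K > 0: E[(e^Y − K)⁺] = (K^{−δ} / (2π)) ∫_ℝ e^{−iη ln K} · E[e^{(δ + 1 + iη) Y}] / ((δ + iη)(δ + 1 + iη)) dη, where the left-hand side is regarded as a complex number via the real-to-complex coercion. (This is the paper's Fourier-inversion pricing formula E[(G_T^{(n−1)} − K')⁺] = (e^{−δ ln K'}/π) ∫_0^∞ e^{−iη ln K'} Ψ_T^G(η; δ) dη, written as an integral over the whole real line.) -/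
open MeasureTheory Complex Set
open scoped Real

/-- `∫_0^∞ e^{-sx} dx = 1/s` for `Re s > 0`. -/
lemma integrableOn_cexp_neg_mul {s : ℂ} (hs : 0 < s.re) :
    IntegrableOn (fun x : ℝ => Complex.exp (-(s * x))) (Ioi 0) := by
  apply Integrable.mono' (exp_neg_integrableOn_Ioi 0 hs)
  · exact (Complex.continuous_exp.comp (by continuity)).aestronglyMeasurable
  · filter_upwards with x
    simp [Complex.norm_exp]

lemma integral_cexp_neg_mul_Ioi {s : ℂ} (hs : 0 < s.re) :
    ∫ x in Ioi (0:ℝ), Complex.exp (-(s * x)) = 1 / s := by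
  have hs0 : s ≠ 0 := by
    intro h; rw [h] at hs; simp at hs
  have h1 : Filter.Tendsto (fun b : ℝ => ∫ x in (0:ℝ)..b, Complex.exp (-(s * x)))
      Filter.atTop (nhds (∫ x in Ioi (0:ℝ), Complex.exp (-(s * x)))) :=
    intervalIntegral_tendsto_integral_Ioi 0 (integrableOn_cexp_neg_mul hs) Filter.tendsto_id
  have h2 : ∀ b : ℝ, (∫ x in (0:ℝ)..b, Complex.exp (-(s * x)))
      = (Complex.exp (-s * b) - 1) / (-s) := by
    intro b
    have := integral_exp_mul_complex (a := 0) (b := b) (c := -s) (by simpa using hs0)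
    simpa [neg_mul] using this
  have h3 : Filter.Tendsto (fun b : ℝ => (Complex.exp (-s * b) - 1) / (-s))
      Filter.atTop (nhds (((0:ℂ) - 1) / (-s))) := by
    apply Filter.Tendsto.div_const
    apply Filter.Tendsto.sub_const
    rw [tendsto_zero_iff_norm_tendsto_zero]
    have : ∀ b : ℝ, ‖Complex.exp (-s * b)‖ = Real.exp (-s.re * b) := by
      intro b; simp [Complex.norm_exp]
    simp_rw [this]
    exact Real.tendsto_exp_atBot.comp
      (Filter.Tendsto.const_mul_atTop_of_neg (neg_neg_iff_pos.mpr hs) Filter.tendsto_id)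
  have := tendsto_nhds_unique h1 (h3.congr (fun b => (h2 b).symm))
  rw [this]
  field_simp
  norm_num

noncomputable def Dd (δ η : ℝ) : ℂ := ((δ:ℂ) + η * Complex.I) * ((δ:ℂ) + 1 + η * Complex.I)

noncomputable def gr (δ x : ℝ) : ℝ := Real.exp (-((δ+1)*x)) * max (Real.exp x - 1) 0

noncomputable def cg (δ : ℝ) (x : ℝ) : ℂ := ((gr δ x : ℝ) : ℂ)

lemma fact1 {δ : ℝ} (hδ : 0 < δ) (η : ℝ) : ((δ:ℂ) + η * Complex.I) ≠ 0 := by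
  intro h
  have := congrArg Complex.re h
  simp at this
  exact hδ.ne' this

lemma fact2 {δ : ℝ} (hδ : 0 < δ) (η : ℝ) : ((δ:ℂ) + 1 + η * Complex.I) ≠ 0 := by
  intro h
  have := congrArg Complex.re h
  simp at this
  linarith

lemma Dd_ne_zero {δ : ℝ} (hδ : 0 < δ) (η : ℝ) : Dd δ η ≠ 0 :=
  mul_ne_zero (fact1 hδ η) (fact2 hδ η)

lemma norm1 (δ η : ℝ) : ‖(δ:ℂ) + η * Complex.I‖ = Real.sqrt (δ^2 + η^2) := by
  rw [Complex.norm_def, Complex.normSq_add_mul_I]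

lemma norm2 (δ η : ℝ) : ‖(δ:ℂ) + 1 + η * Complex.I‖ = Real.sqrt ((δ+1)^2 + η^2) := by
  have : (δ:ℂ) + 1 + η * Complex.I = ((δ+1:ℝ):ℂ) + η * Complex.I := by push_cast; ring
  rw [this, Complex.norm_def, Complex.normSq_add_mul_I]

lemma Dd_norm_ge {δ : ℝ} (hδ : 0 < δ) (η : ℝ) : δ^2 + η^2 ≤ ‖Dd δ η‖ := by
  rw [Dd, norm_mul, norm1, norm2]
  have h0 : (0:ℝ) ≤ δ^2 + η^2 := by positivity
  have h1 : Real.sqrt (δ^2 + η^2) ≤ Real.sqrt ((δ+1)^2 + η^2) :=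
    Real.sqrt_le_sqrt (by nlinarith)
  calc δ^2 + η^2 = Real.sqrt (δ^2+η^2) * Real.sqrt (δ^2+η^2) := (Real.mul_self_sqrt h0).symm
    _ ≤ Real.sqrt (δ^2+η^2) * Real.sqrt ((δ+1)^2+η^2) :=
        mul_le_mul_of_nonneg_left h1 (Real.sqrt_nonneg _)

lemma Dd_pos {δ : ℝ} (hδ : 0 < δ) (η : ℝ) : (0:ℝ) < ‖Dd δ η‖ :=
  lt_of_lt_of_le (by positivity) (Dd_norm_ge hδ η)

/-- integrability of `(δ² + (c η)²)⁻¹`. -/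
lemma integrable_kernel {δ : ℝ} (hδ : 0 < δ) {c : ℝ} (hc : c ≠ 0) :
    Integrable (fun η : ℝ => (δ^2 + (c*η)^2)⁻¹) := by
  have base : Integrable (fun η : ℝ => (δ^2 + η^2)⁻¹) := by
    have h1 : Integrable (fun η : ℝ => (δ^2)⁻¹ * (1 + (η/δ)^2)⁻¹) :=
      (integrable_inv_one_add_sq.comp_div hδ.ne').const_mul _
    apply h1.congr
    filter_upwards with η
    rw [← mul_inv]
    congr 1
    field_simp
  have := base.comp_mul_left' hc
  exact this

lemma gr_continuous (δ : ℝ) : Continuous (gr δ) := by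
  unfold gr; continuity

lemma cg_continuous (δ : ℝ) : Continuous (cg δ) :=
  Complex.continuous_ofReal.comp (gr_continuous δ)

lemma gr_bound {δ : ℝ} (hδ : 0 < δ) (x : ℝ) :
    ‖gr δ x‖ ≤ Set.indicator (Ioi 0) (fun x => Real.exp (-δ * x)) x := by
  unfold gr
  by_cases hx : x ∈ Ioi (0:ℝ)
  · rw [Set.indicator_of_mem hx]
    rw [Real.norm_eq_abs, _root_.abs_of_nonneg (by positivity)]
    have h1 : max (Real.exp x - 1) 0 ≤ Real.exp x := by
      apply max_le (by linarith [Real.exp_pos x]) (Real.exp_pos x).le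
    calc Real.exp (-((δ+1)*x)) * max (Real.exp x - 1) 0
        ≤ Real.exp (-((δ+1)*x)) * Real.exp x :=
          mul_le_mul_of_nonneg_left h1 (Real.exp_pos _).le
      _ = Real.exp (-δ * x) := by rw [← Real.exp_add]; ring_nf
  · rw [Set.indicator_of_notMem hx]
    simp only [mem_Ioi, not_lt] at hx
    have h1 : Real.exp x ≤ 1 := Real.exp_le_one_iff.mpr hx
    have : max (Real.exp x - 1) 0 = 0 := max_eq_right (by linarith)
    rw [this]
    simp

lemma cg_integrable {δ : ℝ} (hδ : 0 < δ) : Integrable (cg δ) := by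
  have hbound : Integrable (Set.indicator (Ioi 0) (fun x => Real.exp (-δ * x))) :=
    (exp_neg_integrableOn_Ioi 0 hδ).integrable_indicator measurableSet_Ioi
  apply Integrable.mono' hbound (cg_continuous δ).aestronglyMeasurable
  filter_upwards with x
  rw [cg, Complex.norm_real]
  exact gr_bound hδ x

/-- Fourier transform of `cg`. -/
lemma fourier_cg {δ : ℝ} (hδ : 0 < δ) (ξ : ℝ) :
    FourierTransform.fourier (cg δ) ξ = 1 / Dd δ (2*π*ξ) := by
  rw [Real.fourier_real_eq_integral_exp_smul]
  set s₁ : ℂ := (δ:ℂ) + ((2*π*ξ:ℝ):ℂ) * Complex.I with hs₁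
  set s₂ : ℂ := (δ:ℂ) + 1 + ((2*π*ξ:ℝ):ℂ) * Complex.I with hs₂
  have hs₁re : 0 < s₁.re := by simp [hs₁]; exact hδ
  have hs₂re : 0 < s₂.re := by simp [hs₂]; linarith
  have key : (fun v : ℝ => Complex.exp (↑(-2 * π * v * ξ) * Complex.I) • cg δ v)
      = Set.indicator (Ioi 0)
        (fun v : ℝ => Complex.exp (-(s₁ * v)) - Complex.exp (-(s₂ * v))) := by
    funext v
    by_cases hv : v ∈ Ioi (0:ℝ)
    · rw [Set.indicator_of_mem hv]
      have hv' : (0:ℝ) < v := hv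
      have hmax : max (Real.exp v - 1) 0 = Real.exp v - 1 :=
        max_eq_left (by nlinarith [Real.add_one_le_exp v])
      rw [smul_eq_mul, cg, gr, hmax]
      push_cast
      simp only [mul_sub, mul_one, ← mul_assoc, ← Complex.exp_add]
      congr 2
      · rw [hs₁]; push_cast; ring
      · rw [hs₂]; push_cast; ring
    · rw [Set.indicator_of_notMem hv]
      simp only [mem_Ioi, not_lt] at hv
      have h1 : Real.exp v ≤ 1 := Real.exp_le_one_iff.mpr hv
      have : max (Real.exp v - 1) 0 = 0 := max_eq_right (by linarith)
      rw [smul_eq_mul, cg, gr, this]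
      simp
  rw [key, integral_indicator measurableSet_Ioi,
    integral_sub (integrableOn_cexp_neg_mul hs₁re) (integrableOn_cexp_neg_mul hs₂re),
    integral_cexp_neg_mul_Ioi hs₁re, integral_cexp_neg_mul_Ioi hs₂re]
  have hs₁0 : s₁ ≠ 0 := fact1 hδ _
  have hs₂0 : s₂ ≠ 0 := fact2 hδ _
  have hDd : Dd δ (2*π*ξ) = s₁ * s₂ := by rw [Dd, hs₁, hs₂]
  rw [hDd, div_sub_div _ _ hs₁0 hs₂0]
  have hs : s₂ = s₁ + 1 := by rw [hs₁, hs₂]; ring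
  rw [hs]
  have h1 : s₁ + 1 - s₁ = 1 := by ring
  rw [mul_one, one_mul, h1]

open scoped RealInnerProductSpace in
lemma fourier_cg_integrable {δ : ℝ} (hδ : 0 < δ) :
    Integrable (FourierTransform.fourier (cg δ)) := by
  have h2π : (2*π : ℝ) ≠ 0 := by positivity
  have hcont : Continuous fun ξ : ℝ => Dd δ (2*π*ξ) := by
    unfold Dd; fun_prop
  have hc2 : Continuous fun ξ : ℝ => (1:ℂ) / Dd δ (2*π*ξ) := by
    exact continuous_const.div hcont (fun ξ => Dd_ne_zero hδ _)
  have hmeas : AEStronglyMeasurable (FourierTransform.fourier (cg δ)) volume :=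
    hc2.aestronglyMeasurable.congr
      (by filter_upwards with ξ; rw [fourier_cg hδ ξ])
  apply Integrable.mono' (integrable_kernel hδ h2π) hmeas
  filter_upwards with ξ
  rw [fourier_cg hδ ξ, norm_div, norm_one, one_div]
  exact inv_anti₀ (by positivity) (Dd_norm_ge hδ _)

open scoped RealInnerProductSpace in
lemma inversion {δ : ℝ} (hδ : 0 < δ) (x : ℝ) :
    ∫ η : ℝ, Complex.exp (((η * x : ℝ) : ℂ) * Complex.I) / Dd δ η
      = 2 * (π:ℂ) * cg δ x := by
  set F : ℝ → ℂ := fun η => Complex.exp (((η * x : ℝ) : ℂ) * Complex.I) / Dd δ η with hF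
  have h := (cg_integrable hδ).fourierInv_fourier_eq (fourier_cg_integrable hδ)
    ((cg_continuous δ).continuousAt : ContinuousAt (cg δ) x)
  rw [Real.fourierInv_eq'] at h
  have hrw : (fun v : ℝ => Complex.exp (((2 * π * inner ℝ v x : ℝ) : ℂ) * Complex.I)
      • FourierTransform.fourier (cg δ) v) = fun v : ℝ => F (2*π*v) := by
    funext v
    rw [smul_eq_mul, fourier_cg hδ v, hF]
    simp only [RCLike.inner_apply, conj_trivial]
    rw [mul_one_div]
    congr 3
    push_cast
    ring
  rw [hrw, MeasureTheory.Measure.integral_comp_mul_left F (2*π)] at h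
  rw [abs_of_pos (by positivity : (0:ℝ) < (2*π)⁻¹)] at h
  have : (2*π : ℝ) • ((2*π:ℝ)⁻¹ • ∫ η, F η) = (2*π:ℝ) • cg δ x := by rw [h]
  rw [smul_smul, mul_inv_cancel₀ (by positivity : (2*π:ℝ) ≠ 0), one_smul] at this
  rw [this, Complex.real_smul]
  push_cast
  ring

lemma key_real {δ K : ℝ} (hδ : 0 < δ) (hK : 0 < K) (y : ℝ) :
    Real.exp ((δ+1)*y) * gr δ (y - Real.log K) = K ^ δ * max (Real.exp y - K) 0 := by
  unfold gr
  rw [← mul_assoc, ← Real.exp_add]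
  have h1 : (δ+1)*y + -((δ+1)*(y - Real.log K)) = (δ+1) * Real.log K := by ring
  rw [h1]
  have h2 : Real.exp (y - Real.log K) - 1 = (Real.exp y - K)/K := by
    rw [Real.exp_sub, Real.exp_log hK]; field_simp
  rw [h2]
  have h3 : max ((Real.exp y - K)/K) 0 = max (Real.exp y - K) 0 / K := by
    rw [show (0:ℝ) = 0 / K by simp, max_div_div_right hK.le]
    simp
  rw [h3]
  have h4 : Real.exp ((δ+1) * Real.log K) = K ^ (δ+1) := by
    rw [Real.rpow_def_of_pos hK]; ring_nf
  rw [h4, Real.rpow_add hK, Real.rpow_one]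
  field_simp

/-- **Fourier-inversion pricing formula for the geometric-basket call.**
If `E[e^{(δ+1)Y}] < ∞` with `δ > 0` and the damped Fourier transform
`η ↦ E[e^{(δ+1+iη)Y}] / ((δ + iη)(δ + 1 + iη))` is Lebesgue-integrable on `ℝ`,
then for every strike `K > 0`,
`E[(e^Y − K)⁺] = (K^{−δ} / (2π)) ∫_ℝ e^{−iη ln K} E[e^{(δ+1+iη)Y}] / ((δ+iη)(δ+1+iη)) dη`. -/
theorem fourier_inversion_call_price {Ω : Type*} {mF : MeasurableSpace Ω}
    (P : Measure Ω) [IsProbabilityMeasure P]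
    (Y : Ω → ℝ) (hY : Measurable Y) (δ : ℝ) (hδ : 0 < δ)
    (hint : Integrable (fun ω => Real.exp ((δ + 1) * Y ω)) P)
    (hFint : Integrable (fun η : ℝ =>
      (∫ ω, Complex.exp (((δ : ℂ) + 1 + η * Complex.I) * Y ω) ∂P)
        / (((δ : ℂ) + η * Complex.I) * ((δ : ℂ) + 1 + η * Complex.I))))
    (K : ℝ) (hK : 0 < K) :
    ((∫ ω, max (Real.exp (Y ω) - K) 0 ∂P : ℝ) : ℂ)
      = ((K ^ (-δ) : ℝ) : ℂ) / (2 * Real.pi) *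
          ∫ η : ℝ, Complex.exp (-((η : ℂ) * Real.log K) * Complex.I) *
            ((∫ ω, Complex.exp (((δ : ℂ) + 1 + η * Complex.I) * Y ω) ∂P)
              / (((δ : ℂ) + η * Complex.I) * ((δ : ℂ) + 1 + η * Complex.I))) := by
  set k : ℝ := Real.log K with hk
  -- the double-integrand
  set H : ℝ → Ω → ℂ := fun η ω =>
    Complex.exp (-((η:ℂ) * (k:ℂ)) * Complex.I) *
      Complex.exp (((δ:ℂ) + 1 + η * Complex.I) * Y ω) / Dd δ η with hH
  -- Fubini integrability
  have hHmeas : AEStronglyMeasurable (Function.uncurry H) (volume.prod P) := by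
    apply Measurable.aestronglyMeasurable
    unfold H
    unfold Function.uncurry Dd
    fun_prop
  have hHint : Integrable (Function.uncurry H) (volume.prod P) := by
    have hker : Integrable (fun η : ℝ => (δ^2 + η^2)⁻¹) := by
      have := integrable_kernel hδ (one_ne_zero (α := ℝ))
      simpa using this
    refine Integrable.mono' (hker.mul_prod hint) hHmeas ?_
    filter_upwards with p
    obtain ⟨η, ω⟩ := p
    have hre1 : (-((η:ℂ) * (k:ℂ)) * Complex.I).re = 0 := by simp
    have hre2 : ((((δ:ℂ) + 1 + η * Complex.I) * (Y ω : ℂ))).re = (δ+1) * Y ω := by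
      simp [Complex.add_re, Complex.mul_re]
    have hnorm : ‖Function.uncurry H (η, ω)‖
        = Real.exp ((δ+1) * Y ω) / ‖Dd δ η‖ := by
      unfold H
      unfold Function.uncurry
      rw [norm_div, norm_mul,
        Complex.norm_exp, Complex.norm_exp, hre1, hre2, Real.exp_zero, one_mul]
    rw [hnorm]
    have hne : (0:ℝ) < δ^2 + η^2 := by positivity
    rw [div_le_iff₀ (Dd_pos hδ η)]
    have hmul := mul_le_mul_of_nonneg_left (Dd_norm_ge hδ η)
      (by positivity : (0:ℝ) ≤ (δ^2+η^2)⁻¹ * Real.exp ((δ+1) * Y ω))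
    have hfe : (δ^2+η^2)⁻¹ * Real.exp ((δ+1) * Y ω) * (δ^2+η^2)
        = Real.exp ((δ+1) * Y ω) := by field_simp
    nlinarith [hmul, hfe]
  -- Step 1: write the η-integrand as an ω-integral
  have step1 : (∫ η : ℝ, Complex.exp (-((η:ℂ) * (k:ℂ)) * Complex.I) *
        ((∫ ω, Complex.exp (((δ:ℂ) + 1 + η * Complex.I) * Y ω) ∂P) / Dd δ η))
      = ∫ η : ℝ, ∫ ω, H η ω ∂P := by
    congr 1
    funext η
    unfold H
    simp_rw [mul_div_assoc, div_eq_mul_inv, mul_comm (Complex.exp (((δ:ℂ) + 1 + η * Complex.I) * _)) ((Dd δ η)⁻¹), ← mul_assoc]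
    rw [integral_const_mul]
    ring
  -- Step 2: Fubini
  have step2 : (∫ η : ℝ, ∫ ω, H η ω ∂P) = ∫ ω, (∫ η : ℝ, H η ω) ∂P :=
    integral_integral_swap hHint
  -- Step 3: evaluate the inner η-integral
  have step3 : ∀ ω, (∫ η : ℝ, H η ω)
      = (2 * (π:ℂ)) * ((K ^ δ * max (Real.exp (Y ω) - K) 0 : ℝ) : ℂ) := by
    intro ω
    have hsplit : ∀ η : ℝ, H η ω
        = Complex.exp (((δ+1) * Y ω : ℝ) : ℂ) *
          (Complex.exp (((η * (Y ω - k) : ℝ) : ℂ) * Complex.I) / Dd δ η) := by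
      intro η
      have hexp : Complex.exp (-((η:ℂ) * (k:ℂ)) * Complex.I) *
            Complex.exp (((δ:ℂ) + 1 + η * Complex.I) * Y ω)
          = Complex.exp (((δ+1) * Y ω : ℝ) : ℂ) *
            Complex.exp (((η * (Y ω - k) : ℝ) : ℂ) * Complex.I) := by
        rw [← Complex.exp_add, ← Complex.exp_add]
        congr 1
        push_cast
        ring
      rw [show H η ω = Complex.exp (-((η:ℂ) * (k:ℂ)) * Complex.I) *
            Complex.exp (((δ:ℂ) + 1 + η * Complex.I) * Y ω) / Dd δ η from rfl,
        hexp, mul_div_assoc]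
    simp_rw [hsplit]
    rw [integral_const_mul, inversion hδ (Y ω - k)]
    rw [cg, ← Complex.ofReal_exp]
    rw [show ((Real.exp ((δ+1) * Y ω) : ℝ) : ℂ) * ((2*(π:ℂ)) * ((gr δ (Y ω - k) : ℝ) : ℂ))
        = (2*(π:ℂ)) * ((Real.exp ((δ+1) * Y ω) * gr δ (Y ω - k) : ℝ) : ℂ) from by
      push_cast; ring]
    rw [show Real.exp ((δ+1) * Y ω) * gr δ (Y ω - k) = K ^ δ * max (Real.exp (Y ω) - K) 0 from by
      rw [hk]; exact key_real hδ hK (Y ω)]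
  -- Assemble
  have hDd : ∀ η : ℝ, (((δ:ℂ) + η * Complex.I) * ((δ:ℂ) + 1 + η * Complex.I)) = Dd δ η :=
    fun η => rfl
  simp_rw [hDd]
  rw [step1, step2]
  simp_rw [step3]
  rw [integral_const_mul]
  have hcast : (∫ a, ((K ^ δ * max (Real.exp (Y a) - K) 0 : ℝ) : ℂ) ∂P)
      = (((∫ a, K ^ δ * max (Real.exp (Y a) - K) 0 ∂P : ℝ)) : ℂ) := integral_ofReal
  rw [hcast]
  have hKd : (K:ℝ) ^ (-δ) * K ^ δ = 1 := by
    rw [← Real.rpow_add hK]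
    simp
  have hmax : (∫ ω, K ^ δ * max (Real.exp (Y ω) - K) 0 ∂P)
      = K ^ δ * ∫ ω, max (Real.exp (Y ω) - K) 0 ∂P := by
    rw [integral_const_mul]
  rw [hmax, Complex.ofReal_mul]
  have h2π : (2 * (Real.pi:ℂ)) ≠ 0 := by
    intro h
    have := congrArg Complex.re h
    simp at this
  have hone : ((K ^ (-δ) : ℝ) : ℂ) * ((K ^ δ : ℝ) : ℂ) = 1 := by
    rw [← Complex.ofReal_mul, hKd, Complex.ofReal_one]
  rw [div_mul_eq_mul_div, eq_div_iff h2π]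
  linear_combination (-(2*((Real.pi:ℝ):ℂ)) * ((∫ ω, max (Real.exp (Y ω) - K) 0 ∂P : ℝ) : ℂ)) * hone
end

section
/- The map ψ : τ ↦ A₂₂(τ)⁻¹ · A₂₁(τ) satisfies ψ(0) = 0, and for every τ₀ ∈ ℝ at which A₂₂(τ₀) is invertible, ψ is differentiable at τ₀ with derivative ψ(τ₀) H + Hᵀ ψ(τ₀) − 2 ψ(τ₀) Qᵀ Q ψ(τ₀) + U. (This is the paper's Proposition on solving the matrix Riccati ODE ∂ψ/∂τ = ψH + Hᵀψ − 2ψQᵀQψ + R + M, ψ(0) = 0, arising in the Wishart short rate model, via linearization by a block matrix exponential, with U = R + M.) -/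
open Matrix

attribute [local instance] Matrix.linftyOpNormedAddCommGroup Matrix.linftyOpNormedSpace
attribute [local instance] Matrix.linftyOpNormedRing Matrix.linftyOpNormedAlgebra

/-- The linear map extracting the `(2,1)` block of a `2×2` block matrix. -/
def blockLM (d : ℕ) (r c : Fin d → Fin d ⊕ Fin d) :
    Matrix (Fin d ⊕ Fin d) (Fin d ⊕ Fin d) ℝ →ₗ[ℝ] Matrix (Fin d) (Fin d) ℝ where
  toFun M := M.submatrix r c
  map_add' A B := by ext i j; simp [Matrix.submatrix]
  map_smul' a A := by ext i j; simp [Matrix.submatrix]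

theorem hasDerivAt_block (d : ℕ) (r c : Fin d → Fin d ⊕ Fin d)
    (f : ℝ → Matrix (Fin d ⊕ Fin d) (Fin d ⊕ Fin d) ℝ)
    (f' : Matrix (Fin d ⊕ Fin d) (Fin d ⊕ Fin d) ℝ) (t : ℝ)
    (hf : HasDerivAt f f' t) :
    HasDerivAt (fun τ => (f τ).submatrix r c) (f'.submatrix r c) t := by
  have := ((blockLM d r c).toContinuousLinearMap.hasFDerivAt
    (x := f t)).comp_hasDerivAt t hf
  exact this


theorem ric_alg {R : Type*} [Ring R] (ia a b H' Ht K u' : R) (h : ia * a = 1) :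
    ia * b * H' + Ht * (ia * b) - 2 • (ia * b * (K * (ia * b))) + u'
      = -(ia * (b * 2 • K + a * -Ht) * ia) * b + ia * (b * H' + a * u') := by
  have h' : ∀ x : R, ia * (a * x) = x := fun x => by rw [← mul_assoc, h, one_mul]
  simp only [two_smul, mul_add, add_mul, neg_mul, mul_neg, neg_neg, neg_add, mul_assoc, h']
  abel

/-- **Solution of the matrix Riccati ODE by block-matrix exponential linearization.**
With `L = [[H, 2QᵀQ], [U, −Hᵀ]]` and `exp(τL) = [[A₁₁(τ), A₁₂(τ)], [A₂₁(τ), A₂₂(τ)]]`,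
the map `ψ(τ) = A₂₂(τ)⁻¹ A₂₁(τ)` satisfies `ψ(0) = 0`, and at every `τ₀` where `A₂₂(τ₀)`
is invertible, `ψ` is differentiable with derivative `ψH + Hᵀψ − 2ψQᵀQψ + U`. -/
theorem riccati_psi_solution (d : ℕ) (hd : 1 ≤ d)
    (H Q U : Matrix (Fin d) (Fin d) ℝ)
    (L : Matrix (Fin d ⊕ Fin d) (Fin d ⊕ Fin d) ℝ)
    (hL : L = Matrix.fromBlocks H (2 • (Qᵀ * Q)) U (-Hᵀ))
    (A21 A22 : ℝ → Matrix (Fin d) (Fin d) ℝ)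
    (hA21 : ∀ τ : ℝ, A21 τ = (NormedSpace.exp (τ • L)).toBlocks₂₁)
    (hA22 : ∀ τ : ℝ, A22 τ = (NormedSpace.exp (τ • L)).toBlocks₂₂)
    (ψ : ℝ → Matrix (Fin d) (Fin d) ℝ)
    (hψ : ∀ τ : ℝ, ψ τ = (A22 τ)⁻¹ * A21 τ) :
    ψ 0 = 0 ∧ ∀ τ₀ : ℝ, IsUnit (A22 τ₀) →
      HasDerivAt ψ
        (ψ τ₀ * H + Hᵀ * ψ τ₀ - 2 • (ψ τ₀ * (Qᵀ * Q) * ψ τ₀) + U) τ₀ := by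
  constructor
  · have h0 : A21 0 = 0 := by
      rw [hA21, zero_smul, NormedSpace.exp_zero]
      ext i j
      simp [Matrix.toBlocks₂₁, Matrix.one_apply]
    rw [hψ, h0, mul_zero]
  · intro τ₀ hU
    -- rewrite ψ via Ring.inverse
    have hψ' : ψ = fun τ => Ring.inverse (A22 τ) * A21 τ := by
      funext τ; rw [hψ, Matrix.nonsing_inv_eq_ringInverse]
    -- derivative of the exponential
    have hexp : HasDerivAt (fun τ : ℝ => NormedSpace.exp (τ • L))
        (NormedSpace.exp (τ₀ • L) * L) τ₀ := hasDerivAt_exp_smul_const L τ₀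
    set E := NormedSpace.exp (τ₀ • L) with hE
    -- blocks of E * L
    have hEL : E * L = Matrix.fromBlocks
        (E.toBlocks₁₁ * H + E.toBlocks₁₂ * U)
        (E.toBlocks₁₁ * (2 • (Qᵀ * Q)) + E.toBlocks₁₂ * (-Hᵀ))
        (E.toBlocks₂₁ * H + E.toBlocks₂₂ * U)
        (E.toBlocks₂₁ * (2 • (Qᵀ * Q)) + E.toBlocks₂₂ * (-Hᵀ)) := by
      conv_lhs => rw [← Matrix.fromBlocks_toBlocks E, hL]
      rw [Matrix.fromBlocks_multiply]
    have h21 : A21 τ₀ = E.toBlocks₂₁ := by rw [hA21]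
    have h22 : A22 τ₀ = E.toBlocks₂₂ := by rw [hA22]
    -- derivatives of the blocks
    have hdA21 : HasDerivAt A21 (A21 τ₀ * H + A22 τ₀ * U) τ₀ := by
      have := hasDerivAt_block d Sum.inr Sum.inl _ _ τ₀ hexp
      have he : (E * L).submatrix Sum.inr Sum.inl = A21 τ₀ * H + A22 τ₀ * U := by
        rw [hEL, h21, h22]; rfl
      rw [he] at this
      convert this using 2 with τ
      rw [hA21]; rfl
    have hdA22 : HasDerivAt A22 (A21 τ₀ * (2 • (Qᵀ * Q)) + A22 τ₀ * (-Hᵀ)) τ₀ := by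
      have := hasDerivAt_block d Sum.inr Sum.inr _ _ τ₀ hexp
      have he : (E * L).submatrix Sum.inr Sum.inr
          = A21 τ₀ * (2 • (Qᵀ * Q)) + A22 τ₀ * (-Hᵀ) := by
        rw [hEL, h21, h22]; rfl
      rw [he] at this
      convert this using 2 with τ
      rw [hA22]; rfl
    -- derivative of the inverse
    obtain ⟨u, hu⟩ := hU
    have hinv : HasDerivAt (fun τ => Ring.inverse (A22 τ))
        (-(Ring.inverse (A22 τ₀) *
            (A21 τ₀ * (2 • (Qᵀ * Q)) + A22 τ₀ * (-Hᵀ)) * Ring.inverse (A22 τ₀))) τ₀ := by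
      have hf := (hasFDerivAt_ringInverse (𝕜 := ℝ) u)
      rw [hu] at hf
      have := hf.comp_hasDerivAt τ₀ hdA22
      simp [ContinuousLinearMap.mulLeftRight_apply, ← hu, Ring.inverse_unit, Function.comp_def] at this ⊢
      exact this
    -- product rule
    have hprod := hinv.mul hdA21
    have hia : Ring.inverse (A22 τ₀) * A22 τ₀ = 1 :=
      Ring.inverse_mul_cancel _ ⟨u, hu⟩
    rw [hψ']
    refine hprod.congr_deriv ?_
    simpa only [mul_assoc] using
      (ric_alg (Ring.inverse (A22 τ₀)) (A22 τ₀) (A21 τ₀) H Hᵀ (Qᵀ * Q) U hia).symm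
end

section
/- Let β ∈ ℝ and define φ(τ) = (β/2) (log(det A₂₂(τ)) + τ · tr(Hᵀ)). Then φ(0) = 0, and for every τ₀ ∈ ℝ with det A₂₂(τ₀) > 0, φ is differentiable at τ₀ with derivative tr(β Qᵀ Q ψ(τ₀)), where ψ(τ₀) = A₂₂(τ₀)⁻¹ A₂₁(τ₀). (This is the second half of the paper's Proposition solving the Riccati system for the Wishart short rate model: φ solves ∂φ/∂τ = Tr[β QᵀQ ψ(τ)], φ(0) = 0.) -/
open Matrix

/-- Entrywise Jacobi formula: derivative of `det` along a curve of matrices. -/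
theorem det_hasDerivAt_aux {n : Type*} [Fintype n] [DecidableEq n]
    {A : ℝ → Matrix n n ℝ} {A' : Matrix n n ℝ} {τ₀ : ℝ}
    (h : ∀ i j, HasDerivAt (fun τ => A τ i j) (A' i j) τ₀) :
    HasDerivAt (fun τ => (A τ).det) (((A τ₀).adjugate * A').trace) τ₀ := by
  have hder : HasDerivAt (fun τ => (A τ).det)
      (∑ σ : Equiv.Perm n, (Equiv.Perm.sign σ : ℝ) *
        ∑ i, (∏ j ∈ Finset.univ.erase i, A τ₀ (σ j) j) * A' (σ i) i) τ₀ := by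
    simp only [Matrix.det_apply']
    exact HasDerivAt.fun_sum fun σ _ =>
      (HasDerivAt.fun_finsetProd fun i _ => h (σ i) i).const_mul _
  convert hder using 1
  have key : ∀ i : n, ((A τ₀).updateCol i (fun k => A' k i)).det
      = ∑ σ : Equiv.Perm n, (Equiv.Perm.sign σ : ℝ) *
          ((∏ j ∈ Finset.univ.erase i, A τ₀ (σ j) j) * A' (σ i) i) := by
    intro i
    rw [Matrix.det_apply']
    refine Finset.sum_congr rfl fun σ _ => ?_
    congr 1
    rw [← Finset.mul_prod_erase _ _ (Finset.mem_univ i), Matrix.updateCol_self, mul_comm]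
    congr 1
    exact Finset.prod_congr rfl fun j hj =>
      Matrix.updateCol_ne (Finset.ne_of_mem_erase hj)
  calc ((A τ₀).adjugate * A').trace
      = ∑ i, ∑ k, (A τ₀).adjugate i k * A' k i := by
        simp [Matrix.trace, Matrix.diag, Matrix.mul_apply]
    _ = ∑ i, ((A τ₀).updateCol i (fun k => A' k i)).det := by
        refine Finset.sum_congr rfl fun i _ => ?_
        rw [← Matrix.cramer_apply, Matrix.cramer_eq_adjugate_mulVec]
        simp [Matrix.mulVec, dotProduct]
    _ = ∑ σ : Equiv.Perm n, (Equiv.Perm.sign σ : ℝ) *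
          ∑ i, (∏ j ∈ Finset.univ.erase i, A τ₀ (σ j) j) * A' (σ i) i := by
        simp only [key, Finset.mul_sum]
        rw [Finset.sum_comm]

/-- Entries of `τ ↦ exp(τ • L)` are differentiable, with derivative the entries of
`exp(τ₀ • L) * L`. -/
theorem exp_entry_hasDerivAt_aux {n : Type*} [Fintype n] [DecidableEq n]
    (L : Matrix n n ℝ) (τ₀ : ℝ) (i j : n) :
    HasDerivAt (fun τ : ℝ => NormedSpace.exp (τ • L) i j)
      ((NormedSpace.exp (τ₀ • L) * L) i j) τ₀ := by
  letI : SeminormedRing (Matrix n n ℝ) := Matrix.linftyOpSemiNormedRing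
  letI : NormedRing (Matrix n n ℝ) := Matrix.linftyOpNormedRing
  letI : NormedAlgebra ℝ (Matrix n n ℝ) := Matrix.linftyOpNormedAlgebra
  have hexp : HasDerivAt (fun τ : ℝ => NormedSpace.exp (τ • L))
      (NormedSpace.exp (τ₀ • L) * L) τ₀ :=
    hasDerivAt_exp_smul_const (𝕂 := ℝ) L τ₀
  let E : Matrix n n ℝ →ₗ[ℝ] ℝ :=
    { toFun := fun M => M i j
      map_add' := fun _ _ => rfl
      map_smul' := fun _ _ => rfl }
  have hcont : Continuous E := E.continuous_of_finiteDimensional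
  have := (ContinuousLinearMap.hasFDerivAt ⟨E, hcont⟩).comp_hasDerivAt τ₀ hexp
  exact this

/-- **Solution of the φ-equation of the Riccati system for the Wishart model.**
With `L = [[H, 2QᵀQ], [U, −Hᵀ]]`, `exp(τL) = [[A₁₁(τ), A₁₂(τ)], [A₂₁(τ), A₂₂(τ)]]` and
`φ(τ) = (β/2)(log det A₂₂(τ) + τ tr(Hᵀ))`, we have `φ(0) = 0`, and at every `τ₀`
with `det A₂₂(τ₀) > 0`, `φ` is differentiable with derivative
`tr(β QᵀQ ψ(τ₀))`, where `ψ(τ₀) = A₂₂(τ₀)⁻¹ A₂₁(τ₀)`. -/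
theorem riccati_phi_solution (d : ℕ) (hd : 1 ≤ d) (β : ℝ)
    (H Q U : Matrix (Fin d) (Fin d) ℝ)
    (L : Matrix (Fin d ⊕ Fin d) (Fin d ⊕ Fin d) ℝ)
    (hL : L = Matrix.fromBlocks H (2 • (Qᵀ * Q)) U (-Hᵀ))
    (A21 A22 : ℝ → Matrix (Fin d) (Fin d) ℝ)
    (hA21 : ∀ τ : ℝ, A21 τ = (NormedSpace.exp (τ • L)).toBlocks₂₁)
    (hA22 : ∀ τ : ℝ, A22 τ = (NormedSpace.exp (τ • L)).toBlocks₂₂)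
    (φ : ℝ → ℝ)
    (hφ : ∀ τ : ℝ, φ τ = (β / 2) * (Real.log (A22 τ).det + τ * Hᵀ.trace)) :
    φ 0 = 0 ∧ ∀ τ₀ : ℝ, 0 < (A22 τ₀).det →
      HasDerivAt φ ((β • (Qᵀ * Q) * ((A22 τ₀)⁻¹ * A21 τ₀)).trace) τ₀ := by
  constructor
  · have h1 : A22 0 = 1 := by
      rw [hA22 0, zero_smul, NormedSpace.exp_zero, ← Matrix.fromBlocks_one,
        Matrix.toBlocks_fromBlocks₂₂]
    rw [hφ 0, h1]
    simp
  · intro τ₀ hdet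
    set M := A22 τ₀ with hM
    set E : Matrix (Fin d) (Fin d) ℝ := A21 τ₀ * (2 • (Qᵀ * Q)) + A22 τ₀ * (-Hᵀ) with hE
    have hblock : (NormedSpace.exp (τ₀ • L) * L).toBlocks₂₂ = E := by
      have h1 : NormedSpace.exp (τ₀ • L) * L
          = Matrix.fromBlocks (NormedSpace.exp (τ₀ • L)).toBlocks₁₁
              (NormedSpace.exp (τ₀ • L)).toBlocks₁₂ (NormedSpace.exp (τ₀ • L)).toBlocks₂₁
              (NormedSpace.exp (τ₀ • L)).toBlocks₂₂
            * Matrix.fromBlocks H (2 • (Qᵀ * Q)) U (-Hᵀ) := by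
        rw [← hL, Matrix.fromBlocks_toBlocks]
      rw [h1, Matrix.fromBlocks_multiply, Matrix.toBlocks_fromBlocks₂₂, hE, hA21, hA22]
    have hent : ∀ i j, HasDerivAt (fun τ => A22 τ i j) (E i j) τ₀ := by
      intro i j
      have h0 := exp_entry_hasDerivAt_aux L τ₀ (Sum.inr i) (Sum.inr j)
      have h1 : ∀ τ : ℝ, A22 τ i j = NormedSpace.exp (τ • L) (Sum.inr i) (Sum.inr j) := by
        intro τ; rw [hA22 τ]; rfl
      have h2 : E i j = (NormedSpace.exp (τ₀ • L) * L) (Sum.inr i) (Sum.inr j) := by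
        rw [← hblock]; rfl
      simp only [h1, h2]
      exact h0
    have hdet' : HasDerivAt (fun τ => (A22 τ).det) ((M.adjugate * E).trace) τ₀ :=
      det_hasDerivAt_aux hent
    have hlog : HasDerivAt (fun τ => Real.log (A22 τ).det)
        ((M.adjugate * E).trace / M.det) τ₀ := hdet'.log (ne_of_gt hdet)
    have hmul : HasDerivAt (fun τ : ℝ => τ * Hᵀ.trace) Hᵀ.trace τ₀ := by
      simpa using (hasDerivAt_id τ₀).mul_const Hᵀ.trace
    have hφfun : φ = fun τ => (β / 2) * (Real.log (A22 τ).det + τ * Hᵀ.trace) := funext hφ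
    have hder : HasDerivAt φ ((β / 2) * ((M.adjugate * E).trace / M.det + Hᵀ.trace)) τ₀ := by
      rw [hφfun]
      exact (hlog.add hmul).const_mul _
    have htr : (M.adjugate * E).trace
        = 2 * (M.adjugate * (A21 τ₀ * (Qᵀ * Q))).trace - M.det * Hᵀ.trace := by
      have e1 : M.adjugate * (A21 τ₀ * (2 • (Qᵀ * Q)))
          = 2 • (M.adjugate * (A21 τ₀ * (Qᵀ * Q))) := by
        rw [Matrix.mul_smul, Matrix.mul_smul]
      have e2 : M.adjugate * (A22 τ₀ * (-Hᵀ)) = M.det • (-Hᵀ) := by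
        rw [← Matrix.mul_assoc, ← hM, Matrix.adjugate_mul, Matrix.smul_mul, Matrix.one_mul]
      rw [hE, Matrix.mul_add, Matrix.trace_add, e1, e2, Matrix.trace_smul, Matrix.trace_smul,
        Matrix.trace_neg, smul_eq_mul]
      push_cast
      ring
    have hinv : M⁻¹ = M.det⁻¹ • M.adjugate := by
      rw [Matrix.inv_def, Ring.inverse_eq_inv']
    have hLHS : (β • (Qᵀ * Q) * ((A22 τ₀)⁻¹ * A21 τ₀)).trace
        = β * M.det⁻¹ * (M.adjugate * (A21 τ₀ * (Qᵀ * Q))).trace := by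
      rw [← hM, hinv, Matrix.smul_mul, Matrix.trace_smul, smul_eq_mul,
        Matrix.trace_mul_comm, Matrix.mul_assoc, Matrix.smul_mul, Matrix.trace_smul,
        smul_eq_mul]
      ring
    have hdet0 : M.det ≠ 0 := ne_of_gt hdet
    have : (β / 2) * ((M.adjugate * E).trace / M.det + Hᵀ.trace)
        = (β • (Qᵀ * Q) * ((A22 τ₀)⁻¹ * A21 τ₀)).trace := by
      rw [htr, hLHS]
      field_simp
      ring
    exact this ▸ hder
end

section
/- Let u be a symmetric d×d real matrix and define g : M_d(ℝ) → ℝ by g(x) = exp(−tr(u·x)). Then for every x ∈ M_d(ℝ): Σ_{i,j} (βQᵀQ + Hx + xHᵀ)_{ij} · (∂g/∂x_{ji})(x) + 2 Σ_{i,j,k,l} x_{ij} (QᵀQ)_{kl} · (∂²g/∂x_{jk}∂x_{li})(x) = ( −tr(βQᵀQ u) + tr((2 u QᵀQ u − u H − Hᵀ u) x) ) · g(x). (This is the paper's computation of the Wishart infinitesimal generator 𝒜 = Tr((βQᵀQ + Hx + xHᵀ)D^S + 2x D^S QᵀQ D^S) applied to e^{−Tr(ψ x)}, used in the proof of its zero-coupon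 bond pricing theorem.) -/
open Matrix

attribute [local instance] Matrix.linftyOpNormedAddCommGroup Matrix.linftyOpNormedSpace

/-- **The Wishart generator applied to an exponentially affine function.**
For symmetric `u` and `g(x) = exp(−tr(u x))`, the Wishart generator
`𝒜 = Tr((βQᵀQ + Hx + xHᵀ)Dˢ + 2x Dˢ QᵀQ Dˢ)` satisfies
`𝒜 g(x) = (−tr(βQᵀQ u) + tr((2uQᵀQu − uH − Hᵀu)x)) g(x)`,
where partial derivatives are directional derivatives along elementary matrices. -/
theorem wishart_generator_exp_affine (d : ℕ) (hd : 1 ≤ d) (β : ℝ)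
    (H Q : Matrix (Fin d) (Fin d) ℝ)
    (u : Matrix (Fin d) (Fin d) ℝ) (hu : uᵀ = u)
    (g : Matrix (Fin d) (Fin d) ℝ → ℝ)
    (hg : g = fun x => Real.exp (-(u * x).trace))
    (x : Matrix (Fin d) (Fin d) ℝ) :
    (∑ i, ∑ j, (β • (Qᵀ * Q) + H * x + x * Hᵀ) i j *
        fderiv ℝ g x (Matrix.single j i 1))
      + 2 * ∑ i, ∑ j, ∑ k, ∑ l, x i j * (Qᵀ * Q) k l *
          fderiv ℝ (fun y => fderiv ℝ g y (Matrix.single l i 1)) x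
            (Matrix.single j k 1)
      = (-(β • (Qᵀ * Q) * u).trace
          + ((2 • (u * (Qᵀ * Q) * u) - u * H - Hᵀ * u) * x).trace) * g x := by
  have hsym : ∀ i j, u i j = u j i := by
    intro i j; nth_rewrite 1 [← hu]; rw [Matrix.transpose_apply]
  -- continuous linear map L v = -(u*v).trace
  set L : Matrix (Fin d) (Fin d) ℝ →L[ℝ] ℝ :=
    LinearMap.toContinuousLinearMap
      (-((Matrix.traceLinearMap (Fin d) ℝ ℝ).comp (LinearMap.mulLeft ℝ u))) with hLdef
  have hLv : ∀ v, L v = -(u * v).trace := fun v => rfl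
  have hg' : ∀ y, HasFDerivAt g (Real.exp (L y) • (L : Matrix (Fin d) (Fin d) ℝ →L[ℝ] ℝ)) y := by
    intro y
    rw [hg]
    have := (L.hasFDerivAt (x := y)).exp
    exact this
  have hd1 : ∀ y v, fderiv ℝ g y v = -(u * v).trace * g y := by
    intro y v
    rw [(hg' y).fderiv]
    simp [hLv, hg, mul_comm]
  have hd2 : ∀ v w : Matrix (Fin d) (Fin d) ℝ,
      fderiv ℝ (fun y => fderiv ℝ g y v) x w
        = (u * v).trace * ((u * w).trace * g x) := by
    intro v w
    have h1 : (fun y => fderiv ℝ g y v) = fun y => -(u * v).trace * g y := by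
      funext y; exact hd1 y v
    rw [h1, show fderiv ℝ (fun y => -(u * v).trace * g y) x = _ from ((hg' x).const_mul (-(u * v).trace)).fderiv]
    simp only [ContinuousLinearMap.smul_apply, hLv, hg, smul_eq_mul]
    change -(u * v).trace * (Real.exp (-(u * x).trace) * L w) = _
    rw [hLv]
    ring
  have htr : ∀ a b : Fin d, (u * Matrix.single a b (1:ℝ)).trace = u b a := by
    intro a b
    simp [Matrix.trace, Matrix.diag, Matrix.mul_apply, Matrix.single,
      Finset.mul_sum, ite_and, Finset.sum_ite_eq, Finset.sum_ite_eq']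
  set e := g x with he
  set G := Qᵀ * Q with hG
  have S1 : ∀ A : Matrix (Fin d) (Fin d) ℝ,
      ∑ i, ∑ j, A i j * (-(u i j) * e) = -((A * u).trace * e) := by
    intro A
    simp only [Matrix.trace, Matrix.diag, Matrix.mul_apply, Finset.sum_mul, neg_mul, mul_neg,
      ← Finset.sum_neg_distrib]
    refine Finset.sum_congr rfl fun a _ => Finset.sum_congr rfl fun b _ => ?_
    rw [hsym a b]; ring
  have S2 : (u * G * u * x).trace * e
      = ∑ i, ∑ j, ∑ k, ∑ l, x i j * G k l * (u i l * (u k j * e)) := by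
    calc (u * G * u * x).trace * e
        = ∑ a, ∑ b, ∑ c, ∑ k, u a k * G k c * u c b * x b a * e := by
          simp only [Matrix.trace, Matrix.diag, Matrix.mul_apply, Finset.sum_mul]
      _ = ∑ a, ∑ b, ∑ c, ∑ k, x b a * G k c * (u b c * (u k a * e)) := by
          refine Finset.sum_congr rfl fun a _ => Finset.sum_congr rfl fun b _ =>
            Finset.sum_congr rfl fun c _ => Finset.sum_congr rfl fun k _ => ?_
          rw [hsym b c, hsym k a]; ring
      _ = ∑ i, ∑ j, ∑ k, ∑ l, x i j * G k l * (u i l * (u k j * e)) := by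
          rw [Finset.sum_comm]
          refine Finset.sum_congr rfl fun b _ => Finset.sum_congr rfl fun a _ => ?_
          rw [Finset.sum_comm]
  simp only [hd2]
  simp only [hd1, htr]
  rw [S1 (β • G + H * x + x * Hᵀ), ← S2]
  rw [Matrix.add_mul, Matrix.add_mul, Matrix.trace_add, Matrix.trace_add,
    Matrix.trace_mul_cycle H x u, Matrix.trace_mul_cycle x Hᵀ u,
    Matrix.trace_mul_cycle u x Hᵀ,
    Matrix.sub_mul, Matrix.sub_mul, Matrix.trace_sub, Matrix.trace_sub,
    smul_mul_assoc, Matrix.trace_smul, two_smul ℕ (u * G * u), Matrix.add_mul,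
    Matrix.trace_add]
  simp only [smul_eq_mul]
  ring
end

section
/- Let r̄, μ̄ ∈ ℝ and let R, M be d×d real matrices with R + M symmetric. Let φ : ℝ → ℝ and ψ : ℝ → M_d(ℝ) be differentiable, with ψ(τ) symmetric for every τ, satisfying the Riccati system φ'(τ) = tr(β QᵀQ ψ(τ)) + r̄ + μ̄ and ψ'(τ) = ψ(τ)H + Hᵀψ(τ) − 2ψ(τ)QᵀQψ(τ) + R + M. Define f(τ, x) = exp(−φ(τ) − tr(ψ(τ)·x)). Then for every τ ∈ ℝ and every x ∈ M_d(ℝ): ∂f/∂τ (τ, x) = Σ_{i,j} (βQᵀQ + Hx + xHᵀ)_{ij} · (∂f(τ,·)/∂x_{ji})(x) + 2 Σ_{i,j,k,l} x_{ij} (QᵀQ)_{kl} · (∂²f(τ,·)/∂x_{jk}∂x_{li})(x) − (r̄ + μ̄ + tr((R + M)x)) · f(τ, x). (This is the verification, in the paper's bond-pricing theorem for the Wishart short rate model, that the exponentially affine candidate solves the pricing PDE ∂f/∂τ = 𝒜f − (r̄ + μ̄ + Tr[(R+M)x]) f.) -/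
open Matrix

attribute [local instance] Matrix.linftyOpNormedAddCommGroup Matrix.linftyOpNormedSpace

lemma tr_std {d : ℕ} (S : Matrix (Fin d) (Fin d) ℝ) (a b : Fin d) :
    (S * Matrix.single a b 1).trace = S b a := by
  simp [Matrix.trace, Matrix.diag, Matrix.mul_apply, Matrix.single, ite_and]

noncomputable def trCLM {d : ℕ} (S : Matrix (Fin d) (Fin d) ℝ) :
    Matrix (Fin d) (Fin d) ℝ →L[ℝ] ℝ :=
  LinearMap.toContinuousLinearMap
    ((Matrix.traceLinearMap (Fin d) ℝ ℝ).comp (LinearMap.mulLeft ℝ S))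

lemma trCLM_apply {d : ℕ} (S y : Matrix (Fin d) (Fin d) ℝ) :
    trCLM S y = (S * y).trace := rfl

noncomputable def trCLM2 {d : ℕ} (x : Matrix (Fin d) (Fin d) ℝ) :
    Matrix (Fin d) (Fin d) ℝ →L[ℝ] ℝ :=
  LinearMap.toContinuousLinearMap
    ((Matrix.traceLinearMap (Fin d) ℝ ℝ).comp (LinearMap.mulRight ℝ x))

lemma trCLM2_apply {d : ℕ} (x y : Matrix (Fin d) (Fin d) ℝ) :
    trCLM2 x y = (y * x).trace := rfl

lemma hasFDerivAt_g {d : ℕ} (c : ℝ) (S x : Matrix (Fin d) (Fin d) ℝ) :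
    HasFDerivAt (fun y => Real.exp (c - (S * y).trace))
      ((Real.exp (c - (S * x).trace)) • (-(trCLM S))) x := by
  have h1 : HasFDerivAt (fun y : Matrix (Fin d) (Fin d) ℝ => c - (S * y).trace)
      (-(trCLM S)) x := by
    exact ((trCLM S).hasFDerivAt (x := x)).const_sub c
  exact h1.exp

lemma fderiv_g {d : ℕ} (c : ℝ) (S x v : Matrix (Fin d) (Fin d) ℝ) :
    fderiv ℝ (fun y => Real.exp (c - (S * y).trace)) x v
      = -(Real.exp (c - (S * x).trace)) * (S * v).trace := by
  rw [(hasFDerivAt_g c S x).fderiv]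
  simp [trCLM_apply]

lemma fderiv2 {d : ℕ} (c : ℝ) (S x : Matrix (Fin d) (Fin d) ℝ) (i l j k : Fin d) :
    fderiv ℝ (fun y => fderiv ℝ (fun z => Real.exp (c - (S * z).trace)) y
        (Matrix.single l i 1)) x (Matrix.single j k 1)
      = S i l * S k j * Real.exp (c - (S * x).trace) := by
  have heq : (fun y => fderiv ℝ (fun z => Real.exp (c - (S * z).trace)) y
      (Matrix.single l i 1))
      = fun y => (-(S i l)) * Real.exp (c - (S * y).trace) := by
    funext y
    rw [fderiv_g, tr_std]
    ring
  have h2 := ((hasFDerivAt_g c S x).const_mul (-(S i l)))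
  rw [heq]
  refine (congrArg (fun L => L (Matrix.single j k 1)) h2.fderiv).trans ?_
  change (-(S i l)) * (Real.exp (c - (S * x).trace) * -(trCLM S (Matrix.single j k 1))) = _
  rw [trCLM_apply, tr_std]
  ring

/-- **The exponentially affine candidate solves the Wishart bond-pricing PDE.**
If `φ` and `ψ` (with `ψ(τ)` symmetric) solve the Riccati system
`φ' = tr(βQᵀQψ) + r̄ + μ̄`, `ψ' = ψH + Hᵀψ − 2ψQᵀQψ + R + M`, then
`f(τ,x) = exp(−φ(τ) − tr(ψ(τ)x))` satisfies
`∂f/∂τ = 𝒜f − (r̄ + μ̄ + tr((R+M)x)) f`, where `𝒜` is the Wishart generator,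
with partial derivatives taken along elementary matrices. -/
theorem wishart_pricing_pde (d : ℕ) (hd : 1 ≤ d) (β : ℝ)
    (H Q : Matrix (Fin d) (Fin d) ℝ)
    (rbar μbar : ℝ) (R M : Matrix (Fin d) (Fin d) ℝ) (hRM : (R + M)ᵀ = R + M)
    (φ : ℝ → ℝ) (ψ : ℝ → Matrix (Fin d) (Fin d) ℝ)
    (hψsymm : ∀ τ : ℝ, (ψ τ)ᵀ = ψ τ)
    (hφ : ∀ τ : ℝ, HasDerivAt φ ((β • (Qᵀ * Q) * ψ τ).trace + rbar + μbar) τ)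
    (hψ : ∀ τ : ℝ, HasDerivAt ψ
      (ψ τ * H + Hᵀ * ψ τ - 2 • (ψ τ * (Qᵀ * Q) * ψ τ) + R + M) τ)
    (f : ℝ → Matrix (Fin d) (Fin d) ℝ → ℝ)
    (hf : f = fun τ x => Real.exp (-φ τ - (ψ τ * x).trace)) :
    ∀ (τ : ℝ) (x : Matrix (Fin d) (Fin d) ℝ),
      HasDerivAt (fun t => f t x)
        ((∑ i, ∑ j, (β • (Qᵀ * Q) + H * x + x * Hᵀ) i j *
            fderiv ℝ (f τ) x (Matrix.single j i 1))
          + 2 * (∑ i, ∑ j, ∑ k, ∑ l, x i j * (Qᵀ * Q) k l *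
              fderiv ℝ (fun y => fderiv ℝ (f τ) y (Matrix.single l i 1)) x
                (Matrix.single j k 1))
          - (rbar + μbar + ((R + M) * x).trace) * f τ x) τ := by
  intro τ x
  subst hf
  set S := ψ τ with hS
  set P := Qᵀ * Q with hP
  set F := Real.exp (-φ τ - (S * x).trace) with hF
  have hs : ∀ a b, S a b = S b a := by
    intro a b
    show ψ τ a b = ψ τ b a
    conv_lhs => rw [← hψsymm τ]
    rfl
  -- derivative in τ
  have ht : HasDerivAt (fun t => (ψ t * x).trace)
      (((S * H + Hᵀ * S - 2 • (S * P * S) + R + M) * x).trace) τ :=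
    (trCLM2 x).hasFDerivAt.comp_hasDerivAt τ (hψ τ)
  have key : HasDerivAt (fun t => Real.exp (-φ t - (ψ t * x).trace))
      (F * (-(((β • P * S).trace + rbar + μbar))
        - ((S * H + Hᵀ * S - 2 • (S * P * S) + R + M) * x).trace)) τ := by
    have h1 : HasDerivAt (fun t => -φ t - (ψ t * x).trace)
        (-(((β • P * S).trace + rbar + μbar))
          - ((S * H + Hᵀ * S - 2 • (S * P * S) + R + M) * x).trace) τ :=
      ((hφ τ).neg).sub ht
    simpa [hF, mul_comm] using h1.exp
  have hval :
      ((∑ i, ∑ j, (β • P + H * x + x * Hᵀ) i j *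
            fderiv ℝ (fun y => Real.exp (-φ τ - (S * y).trace)) x
              (Matrix.single j i 1))
          + 2 * (∑ i, ∑ j, ∑ k, ∑ l, x i j * P k l *
              fderiv ℝ (fun y => fderiv ℝ (fun z => Real.exp (-φ τ - (S * z).trace)) y
                  (Matrix.single l i 1)) x
                (Matrix.single j k 1))
          - (rbar + μbar + ((R + M) * x).trace) * F)
      = (F * (-(((β • P * S).trace + rbar + μbar))
        - ((S * H + Hᵀ * S - 2 • (S * P * S) + R + M) * x).trace)) := by
    simp only [fderiv2]
    simp only [fderiv_g, tr_std, ← hF]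
    -- first sum
    have e1 : (∑ i, ∑ j, (β • P + H * x + x * Hᵀ) i j * (-F * S i j))
        = -F * ((β • P + H * x + x * Hᵀ) * S).trace := by
      simp only [Matrix.trace, Matrix.diag, Matrix.mul_apply, Finset.mul_sum]
      refine Finset.sum_congr rfl fun i _ => Finset.sum_congr rfl fun j _ => ?_
      rw [hs i j]; ring
    have e2 : (∑ i, ∑ j, ∑ k, ∑ l, x i j * P k l * (S i l * S k j * F))
        = F * (x * S * P * S).trace := by
      simp only [Matrix.trace, Matrix.diag, Matrix.mul_apply, Finset.sum_mul,
        Finset.mul_sum]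
      -- reorder sums on the left from i,j,k,l to i,l,k,j
      rw [Finset.sum_congr rfl fun i _ => Finset.sum_comm (f := fun j k =>
        ∑ l, x i j * P k l * (S i l * S k j * F))]
      rw [Finset.sum_congr rfl fun i _ => Finset.sum_congr rfl fun k _ =>
        Finset.sum_comm (f := fun j l => x i j * P k l * (S i l * S k j * F))]
      rw [Finset.sum_congr rfl fun i _ => Finset.sum_comm (f := fun k l =>
        ∑ j, x i j * P k l * (S i l * S k j * F))]
      refine Finset.sum_congr rfl fun i _ => Finset.sum_congr rfl fun l _ =>
        Finset.sum_congr rfl fun k _ => Finset.sum_congr rfl fun j _ => ?_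
      rw [hs i l, hs k j]; ring
    rw [e1, e2]
    -- now pure trace algebra
    have c1 : (H * x * S).trace = (S * H * x).trace := Matrix.trace_mul_cycle H x S
    have c2 : (x * Hᵀ * S).trace = (Hᵀ * S * x).trace :=
      (Matrix.trace_mul_cycle Hᵀ S x).symm
    have c3 : (x * S * P * S).trace = (S * P * S * x).trace := by
      rw [Matrix.trace_mul_comm (S * P * S) x]
      simp only [mul_assoc]
    simp only [add_mul, sub_mul, Matrix.trace_add, Matrix.trace_sub,
      Matrix.smul_mul, Matrix.trace_smul, smul_eq_mul, c1, c2, c3]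
    ring
  rw [hval]
  exact key
end
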